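/- arXiv:1709.10289 — 12 statements merged into one kernel-verified Lean document; each statement's English description precedes it below -/
import Mathlib

section
/- For every set packing game with n players, every real α ≥ 1, every α-approximate Nash equilibrium S = (S_1,…,S_n), and every feasible profile O = (O_1,…,O_n), the total values satisfy w(O) ≤ (α+1)·w(S). -/
/-- For every set packing game with `n` players, every real `α ≥ 1`,
every `α`-approximate Nash equilibrium `S` and every feasible profile `O`,
the total values satisfy `w(O) ≤ (α+1)·w(S)`. -/
theorem set_packing_poa_upper_bound
    {ι : Type} [DecidableEq ι] (J : Finset ι) (w : ι → ℝ)
    (hw : ∀ j ∈ J, 0 ≤ w j) (n : ℕ)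
    (𝒮 : Fin n → Set (Finset ι))
    (hJ : ∀ i, ∀ A ∈ 𝒮 i, A ⊆ J)
    (hdc : ∀ i, ∀ A ∈ 𝒮 i, ∀ T, T ⊆ A → T ∈ 𝒮 i)
    (hempty : ∀ i, ∅ ∈ 𝒮 i)
    (α : ℝ) (hα : 1 ≤ α)
    (S O : Fin n → Finset ι)
    (hS : ∀ i, S i ∈ 𝒮 i)
    (hSdisj : ∀ i k, i ≠ k → Disjoint (S i) (S k))
    (hO : ∀ i, O i ∈ 𝒮 i)
    (hOdisj : ∀ i k, i ≠ k → Disjoint (O i) (O k))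
    (hNash : ∀ i, ∀ T ∈ 𝒮 i, (∀ k, k ≠ i → Disjoint T (S k)) →
      ∑ j ∈ T, w j ≤ α * ∑ j ∈ S i, w j) :
    ∑ i, ∑ j ∈ O i, w j ≤ (α + 1) * ∑ i, ∑ j ∈ S i, w j := by
  classical
  set U : Finset ι := Finset.univ.biUnion S with hU
  have hUJ : U ⊆ J := by
    intro j hj
    rcases Finset.mem_biUnion.1 hj with ⟨k, _, hk⟩
    exact hJ k (S k) (hS k) hk
  -- per-player bound
  have key : ∀ i, ∑ j ∈ O i, w j ≤ α * ∑ j ∈ S i, w j + ∑ j ∈ O i ∩ U, w j := by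
    intro i
    set B : Finset ι := (Finset.univ.erase i).biUnion S with hB
    have hBU : B ⊆ U := Finset.biUnion_subset_biUnion_of_subset_left _ (Finset.erase_subset _ _)
    have hT : O i \ B ∈ 𝒮 i := hdc i (O i) (hO i) _ Finset.sdiff_subset
    have hNi := hNash i _ hT (fun k hk => (Finset.sdiff_disjoint).mono_right
      (Finset.subset_biUnion_of_mem S (Finset.mem_erase.2 ⟨hk, Finset.mem_univ k⟩)))
    have hsplit : ∑ j ∈ O i ∩ B, w j + ∑ j ∈ O i \ B, w j = ∑ j ∈ O i, w j :=
      Finset.sum_inter_add_sum_sdiff _ _ _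
    have hmono : ∑ j ∈ O i ∩ B, w j ≤ ∑ j ∈ O i ∩ U, w j := by
      apply Finset.sum_le_sum_of_subset_of_nonneg
      · exact Finset.inter_subset_inter_left hBU
      · intro j hj _
        exact hw j (hJ i (O i) (hO i) (Finset.mem_inter.1 hj).1)
    linarith
  have h1 : ∑ i, ∑ j ∈ O i, w j ≤
      ∑ i, (α * ∑ j ∈ S i, w j + ∑ j ∈ O i ∩ U, w j) :=
    Finset.sum_le_sum fun i _ => key i
  have h2 : ∑ i, ∑ j ∈ O i ∩ U, w j ≤ ∑ j ∈ U, w j := by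
    have hdisj' : ((Finset.univ : Finset (Fin n)) : Set (Fin n)).PairwiseDisjoint
        (fun i => O i ∩ U) := by
      intro a _ b _ hab
      exact (hOdisj a b hab).mono Finset.inter_subset_left Finset.inter_subset_left
    rw [← Finset.sum_biUnion hdisj']
    apply Finset.sum_le_sum_of_subset_of_nonneg
    · intro j hj
      rcases Finset.mem_biUnion.1 hj with ⟨k, _, hk⟩
      exact (Finset.mem_inter.1 hk).2
    · intro j hj _
      exact hw j (hUJ hj)
  have h3 : ∑ j ∈ U, w j = ∑ i, ∑ j ∈ S i, w j := by
    apply Finset.sum_biUnion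
    intro a _ b _ hab
    exact hSdisj a b hab
  rw [Finset.sum_add_distrib, ← Finset.mul_sum] at h1
  nlinarith [h1, h2, h3]
end

section
/- For all integers p ≥ q ≥ 1 there exists a set packing game with q+1 players, a feasible profile O, and a (p/q)-approximate Nash equilibrium S with w(S) > 0, such that w(O)/w(S) = (p+q)/q; hence the price of anarchy of set packing games under α-approximate Nash equilibria is at least α+1 for every rational α = p/q ≥ 1. -/
/-- For all integers `p ≥ q ≥ 1` there exists a set packing game with
`q+1` players, a feasible profile `O`, and a `(p/q)`-approximate Nash equilibrium `S`
with `w(S) > 0`, such that `w(O)/w(S) = (p+q)/q`; hence the price of anarchy of set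
packing games under `α`-approximate Nash equilibria is at least `α+1` for every
rational `α = p/q ≥ 1`. -/
theorem set_packing_poa_lower_bound
    (p q : ℕ) (hq : 1 ≤ q) (hpq : q ≤ p) :
    ∃ (J : Finset ℕ) (w : ℕ → ℝ) (𝒮 : Fin (q + 1) → Set (Finset ℕ))
      (O S : Fin (q + 1) → Finset ℕ),
      (∀ j ∈ J, 0 ≤ w j) ∧
      (∀ i, ∀ A ∈ 𝒮 i, A ⊆ J) ∧
      (∀ i, ∀ A ∈ 𝒮 i, ∀ T, T ⊆ A → T ∈ 𝒮 i) ∧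
      (∀ i, ∅ ∈ 𝒮 i) ∧
      -- O is a feasible profile
      (∀ i, O i ∈ 𝒮 i) ∧
      (∀ i k, i ≠ k → Disjoint (O i) (O k)) ∧
      -- S is a feasible profile
      (∀ i, S i ∈ 𝒮 i) ∧
      (∀ i k, i ≠ k → Disjoint (S i) (S k)) ∧
      -- S is a (p/q)-approximate Nash equilibrium
      (∀ i, ∀ T ∈ 𝒮 i, (∀ k, k ≠ i → Disjoint T (S k)) →
        ∑ j ∈ T, w j ≤ ((p : ℝ) / q) * ∑ j ∈ S i, w j) ∧
      -- positive value and ratio exactly (p+q)/q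
      0 < ∑ i, ∑ j ∈ S i, w j ∧
      (∑ i, ∑ j ∈ O i, w j) / (∑ i, ∑ j ∈ S i, w j) = ((p : ℝ) + q) / q := by
  have hq0 : (q : ℝ) ≠ 0 := by positivity
  have hp1 : (1 : ℝ) ≤ (p : ℝ) / q := by
    rw [le_div_iff₀ (by positivity)]
    simpa using (Nat.cast_le.2 hpq : (q : ℝ) ≤ p)
  refine ⟨Finset.Icc 1 (2 * q),
    fun j => if j ≤ q then 1 else (p : ℝ) / q,
    fun i => if i = 0 then {A | A ⊆ Finset.Icc 1 q}
      else {A | A ⊆ {(i : ℕ)} ∨ A ⊆ {q + (i : ℕ)}},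
    fun i => if i = 0 then Finset.Icc 1 q else {q + (i : ℕ)},
    fun i => if i = 0 then ∅ else {(i : ℕ)},
    ?_, ?_, ?_, ?_, ?_, ?_, ?_, ?_, ?_, ?_, ?_⟩
  · intro j _
    dsimp only
    split
    · norm_num
    · positivity
  · intro i A hA
    by_cases hi : i = 0
    · simp only [hi, if_pos rfl, Set.mem_setOf_eq] at hA
      exact hA.trans (Finset.Icc_subset_Icc le_rfl (by omega))
    · have hlt : (i : ℕ) < q + 1 := i.isLt
      have hi1 : 1 ≤ (i : ℕ) := by
        rcases Nat.eq_zero_or_pos (i : ℕ) with h | h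
        · exact absurd (Fin.ext (by simp [h]) : i = 0) hi
        · exact h
      simp only [if_neg hi, Set.mem_setOf_eq] at hA
      rcases hA with h | h
      · exact h.trans (by
          intro x hx
          simp only [Finset.mem_singleton] at hx
          simp [Finset.mem_Icc]; omega)
      · exact h.trans (by
          intro x hx
          simp only [Finset.mem_singleton] at hx
          simp [Finset.mem_Icc]; omega)
  · intro i A hA T hT
    by_cases hi : i = 0
    · simp only [hi, if_pos rfl, Set.mem_setOf_eq] at hA ⊢
      exact hT.trans hA
    · simp only [if_neg hi, Set.mem_setOf_eq] at hA ⊢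
      rcases hA with h | h
      · exact Or.inl (hT.trans h)
      · exact Or.inr (hT.trans h)
  · intro i
    by_cases hi : i = 0 <;> simp [hi]
  · intro i
    by_cases hi : i = 0 <;> simp [hi]
  · intro i k hik
    by_cases hi : i = 0 <;> by_cases hk : k = 0
    · exact absurd (hi.trans hk.symm) hik
    · have hk1 : 1 ≤ (k : ℕ) := Nat.one_le_iff_ne_zero.2 (fun h => hk (Fin.ext (by simp [h])))
      simp only [if_pos hi, if_neg hk]
      rw [Finset.disjoint_singleton_right]
      simp only [Finset.mem_Icc]
      omega
    · have hi1 : 1 ≤ (i : ℕ) := Nat.one_le_iff_ne_zero.2 (fun h => hi (Fin.ext (by simp [h])))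
      simp only [if_neg hi, if_pos hk]
      rw [Finset.disjoint_singleton_left]
      simp only [Finset.mem_Icc]
      omega
    · simp only [if_neg hi, if_neg hk]
      rw [Finset.disjoint_singleton_right, Finset.mem_singleton]
      intro h
      exact hik (Fin.ext (by omega))
  · intro i
    by_cases hi : i = 0 <;> simp [hi]
  · intro i k hik
    by_cases hi : i = 0 <;> by_cases hk : k = 0
    · exact absurd (hi.trans hk.symm) hik
    · simp [hi, hk]
    · simp [hi, hk]
    · simp only [if_neg hi, if_neg hk]
      rw [Finset.disjoint_singleton_right, Finset.mem_singleton]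
      intro h
      exact hik (Fin.ext h.symm)
  · intro i T hT hdisj
    by_cases hi : i = 0
    · -- player 0: T must be empty
      subst hi
      have hTempty : T = ∅ := by
        by_contra hne
        obtain ⟨j, hj⟩ := Finset.nonempty_iff_ne_empty.2 hne
        simp only [Set.mem_setOf_eq, if_pos rfl] at hT
        have hjIcc := hT hj
        rw [Finset.mem_Icc] at hjIcc
        have hjlt : j < q + 1 := by omega
        have hk0 : (⟨j, hjlt⟩ : Fin (q + 1)) ≠ 0 := by
          simp only [ne_eq, Fin.ext_iff, Fin.val_zero]
          omega
        have hdk := hdisj ⟨j, hjlt⟩ hk0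
        simp only [if_neg hk0, Finset.disjoint_singleton_right] at hdk
        exact hdk (by simpa using hj)
      subst hTempty
      rw [Finset.sum_empty]
      apply mul_nonneg (by positivity)
      apply Finset.sum_nonneg
      intro j _
      split
      · norm_num
      · positivity
    · -- player i ≥ 1
      have hlt : (i : ℕ) < q + 1 := i.isLt
      have hi1 : 1 ≤ (i : ℕ) := by
        rcases Nat.eq_zero_or_pos (i : ℕ) with h | h
        · exact absurd (Fin.ext (by simp [h]) : i = 0) hi
        · exact h
      simp only [if_neg hi, Set.mem_setOf_eq] at hT
      have hS : (∑ j ∈ (if i = 0 then (∅ : Finset ℕ) else {(i : ℕ)}), 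
          if j ≤ q then (1 : ℝ) else (p : ℝ) / q) = 1 := by
        rw [if_neg hi, Finset.sum_singleton, if_pos (by omega)]
      rw [hS, mul_one]
      rcases hT with h | h
      · calc ∑ j ∈ T, (if j ≤ q then (1 : ℝ) else (p : ℝ) / q)
            ≤ ∑ j ∈ {(i : ℕ)}, (if j ≤ q then (1 : ℝ) else (p : ℝ) / q) := by
              apply Finset.sum_le_sum_of_subset_of_nonneg h
              intro j _ _
              split
              · norm_num
              · positivity
          _ = 1 := by rw [Finset.sum_singleton, if_pos (by omega)]
          _ ≤ (p : ℝ) / q := hp1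
      · calc ∑ j ∈ T, (if j ≤ q then (1 : ℝ) else (p : ℝ) / q)
            ≤ ∑ j ∈ {q + (i : ℕ)}, (if j ≤ q then (1 : ℝ) else (p : ℝ) / q) := by
              apply Finset.sum_le_sum_of_subset_of_nonneg h
              intro j _ _
              split
              · norm_num
              · positivity
          _ = (p : ℝ) / q := by rw [Finset.sum_singleton, if_neg (by omega)]
  · -- positivity of w(S)
    have hsum : (∑ i : Fin (q + 1), ∑ j ∈ (if i = 0 then (∅ : Finset ℕ) else {(i : ℕ)}),
        if j ≤ q then (1 : ℝ) else (p : ℝ) / q) = q := by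
      rw [Fin.sum_univ_succ]
      simp only [if_pos rfl, Finset.sum_empty, zero_add]
      have : ∀ i : Fin q, (∑ j ∈ (if (i.succ : Fin (q + 1)) = 0 then (∅ : Finset ℕ)
          else {((i.succ : Fin (q + 1)) : ℕ)}),
          if j ≤ q then (1 : ℝ) else (p : ℝ) / q) = 1 := by
        intro i
        rw [if_neg (Fin.succ_ne_zero i), Finset.sum_singleton, if_pos]
        simp only [Fin.val_succ]
        omega
      rw [Finset.sum_congr rfl (fun i _ => this i)]
      simp
    simp only [hsum]
    positivity
  · -- ratio
    have hsumS : (∑ i : Fin (q + 1), ∑ j ∈ (if i = 0 then (∅ : Finset ℕ) else {(i : ℕ)}),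
        if j ≤ q then (1 : ℝ) else (p : ℝ) / q) = q := by
      rw [Fin.sum_univ_succ]
      simp only [if_pos rfl, Finset.sum_empty, zero_add]
      have : ∀ i : Fin q, (∑ j ∈ (if (i.succ : Fin (q + 1)) = 0 then (∅ : Finset ℕ)
          else {((i.succ : Fin (q + 1)) : ℕ)}),
          if j ≤ q then (1 : ℝ) else (p : ℝ) / q) = 1 := by
        intro i
        rw [if_neg (Fin.succ_ne_zero i), Finset.sum_singleton, if_pos]
        simp only [Fin.val_succ]
        omega
      rw [Finset.sum_congr rfl (fun i _ => this i)]
      simp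
    have hsumO : (∑ i : Fin (q + 1), ∑ j ∈ (if i = 0 then Finset.Icc 1 q
        else {q + (i : ℕ)}), if j ≤ q then (1 : ℝ) else (p : ℝ) / q) = p + q := by
      rw [Fin.sum_univ_succ]
      have h0 : (∑ j ∈ (if (0 : Fin (q + 1)) = 0 then Finset.Icc 1 q else {q + ((0 : Fin (q+1)) : ℕ)}),
          if j ≤ q then (1 : ℝ) else (p : ℝ) / q) = q := by
        rw [if_pos rfl]
        rw [Finset.sum_congr rfl (fun j hj => if_pos (Finset.mem_Icc.1 hj).2)]
        simp [Nat.card_Icc]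
      have hrest : ∀ i : Fin q, (∑ j ∈ (if (i.succ : Fin (q + 1)) = 0 then Finset.Icc 1 q
          else {q + ((i.succ : Fin (q + 1)) : ℕ)}),
          if j ≤ q then (1 : ℝ) else (p : ℝ) / q) = (p : ℝ) / q := by
        intro i
        rw [if_neg (Fin.succ_ne_zero i), Finset.sum_singleton, if_neg]
        simp only [Fin.val_succ]
        omega
      rw [h0, Finset.sum_congr rfl (fun i _ => hrest i)]
      rw [Finset.sum_const, Finset.card_univ, Fintype.card_fin, nsmul_eq_mul]
      field_simp
      ring
    simp only [hsumS, hsumO]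
end

section
/- For all integers p ≥ q ≥ 1 there exists a set packing game with q+1 players, a feasible profile O, and a feasible profile S with w(S) > 0 satisfying the sequential (p/q)-greedy condition with respect to the player order 1,…,q+1, such that w(O)/w(S) = (p+q)/q; hence the sequential price of anarchy of set packing games under α-approximate subgame perfect equilibria is at least α+1 for every rational α = p/q ≥ 1. -/
/-- For all integers `p ≥ q ≥ 1` there exists a set packing game with
`q+1` players, a feasible profile `O`, and a feasible profile `S` with `w(S) > 0`
satisfying the sequential `(p/q)`-greedy condition with respect to the player order
`1,…,q+1`, such that `w(O)/w(S) = (p+q)/q`; hence the sequential price of anarchy of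
set packing games under `α`-approximate subgame perfect equilibria is at least `α+1`
for every rational `α = p/q ≥ 1`. -/
theorem set_packing_seq_poa_lower_bound
    (p q : ℕ) (hq : 1 ≤ q) (hpq : q ≤ p) :
    ∃ (J : Finset ℕ) (w : ℕ → ℝ) (𝒮 : Fin (q + 1) → Set (Finset ℕ))
      (O S : Fin (q + 1) → Finset ℕ),
      (∀ j ∈ J, 0 ≤ w j) ∧
      (∀ i, ∀ A ∈ 𝒮 i, A ⊆ J) ∧
      (∀ i, ∀ A ∈ 𝒮 i, ∀ T, T ⊆ A → T ∈ 𝒮 i) ∧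
      (∀ i, ∅ ∈ 𝒮 i) ∧
      -- O is a feasible profile
      (∀ i, O i ∈ 𝒮 i) ∧
      (∀ i k, i ≠ k → Disjoint (O i) (O k)) ∧
      -- S is a feasible profile
      (∀ i, S i ∈ 𝒮 i) ∧
      (∀ i k, i ≠ k → Disjoint (S i) (S k)) ∧
      -- S satisfies the sequential (p/q)-greedy condition w.r.t. the order 1,…,q+1
      (∀ i, ∀ T ∈ 𝒮 i, T ⊆ J \ ((Finset.univ.filter (fun j => j < i)).biUnion S) →
        ∑ j ∈ T, w j ≤ ((p : ℝ) / q) * ∑ j ∈ S i, w j) ∧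
      -- positive value and ratio exactly (p+q)/q
      0 < ∑ i, ∑ j ∈ S i, w j ∧
      (∑ i, ∑ j ∈ O i, w j) / (∑ i, ∑ j ∈ S i, w j) = ((p : ℝ) + q) / q := by
  have hq0 : (q : ℝ) ≠ 0 := by positivity
  refine ⟨Finset.range (q + 1),
    (fun j => if j = 0 then (p : ℝ) else 1),
    (fun i => if i = 0 then {A : Finset ℕ | A ⊆ Finset.Icc 1 q ∨ A ⊆ {0}}
      else {A : Finset ℕ | A ⊆ {(i : ℕ)}}),
    (fun i => {(i : ℕ)}),
    (fun i => if i = 0 then Finset.Icc 1 q else ∅), ?_, ?_, ?_, ?_, ?_, ?_, ?_, ?_, ?_, ?_, ?_⟩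
  · intro j _
    by_cases h : j = 0 <;> simp [h] <;> positivity
  · intro i A hA
    dsimp only at hA
    by_cases h : i = 0
    · subst h; rw [ if_pos rfl, Set.mem_setOf_eq] at hA
      rcases hA with hA | hA <;> intro x hx <;> have hx2 := hA hx
      · simp only [Finset.mem_Icc] at hx2; simp only [Finset.mem_range]; omega
      · simp only [Finset.mem_singleton] at hx2; simp only [Finset.mem_range]; omega
    · rw [if_neg h, Set.mem_setOf_eq] at hA
      intro x hx; have hx2 := hA hx
      simp only [Finset.mem_singleton] at hx2; subst hx2
      simp only [Finset.mem_range]; exact i.isLt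
  · intro i A hA T hT
    dsimp only at hA ⊢
    by_cases h : i = 0
    · subst h; rw [if_pos rfl, Set.mem_setOf_eq] at hA ⊢
      rcases hA with hA | hA
      · exact Or.inl (hT.trans hA)
      · exact Or.inr (hT.trans hA)
    · rw [if_neg h, Set.mem_setOf_eq] at hA ⊢
      exact hT.trans hA
  · intro i
    dsimp only
    by_cases h : i = 0
    · rw [if_pos h, Set.mem_setOf_eq]; exact Or.inr (Finset.empty_subset _)
    · rw [if_neg h, Set.mem_setOf_eq]; exact Finset.empty_subset _
  · intro i
    dsimp only
    by_cases h : i = 0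
    · rw [if_pos h, Set.mem_setOf_eq]; right; rw [h]; simp
    · rw [if_neg h, Set.mem_setOf_eq]
  · intro i k hik
    simp only [Finset.disjoint_singleton_left, Finset.mem_singleton]
    exact fun hv => hik (Fin.ext hv)
  · intro i
    dsimp only
    by_cases h : i = 0
    · rw [if_pos h, if_pos h, Set.mem_setOf_eq]; exact Or.inl (le_refl _)
    · rw [if_neg h, if_neg h, Set.mem_setOf_eq]; exact Finset.empty_subset _
  · intro i k hik
    by_cases hi : i = 0 <;> by_cases hk : k = 0 <;> simp [hi, hk] at hik ⊢
  · intro i T hT hTsub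
    dsimp only at hT ⊢
    by_cases hi : i = 0
    · subst hi
      have hsum : ∑ j ∈ Finset.Icc 1 q, (if j = 0 then (p : ℝ) else 1) = q := by
        rw [Finset.sum_congr rfl (fun j hj => by
          simp only [Finset.mem_Icc] at hj
          rw [if_neg (by omega)])]
        simp
      rw [if_pos rfl, Set.mem_setOf_eq] at hT
      rw [if_pos rfl, hsum]
      rw [div_mul_cancel₀ _ hq0]
      rcases hT with hT | hT
      · calc ∑ j ∈ T, (if j = 0 then (p:ℝ) else 1)
            ≤ ∑ j ∈ Finset.Icc 1 q, (if j = 0 then (p:ℝ) else 1) := by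
              apply Finset.sum_le_sum_of_subset_of_nonneg hT
              intro j _ _; by_cases h : j = 0 <;> simp [h]
          _ = q := hsum
          _ ≤ p := by exact_mod_cast hpq
      · calc ∑ j ∈ T, (if j = 0 then (p:ℝ) else 1)
            ≤ ∑ j ∈ {0}, (if j = 0 then (p:ℝ) else 1) := by
              apply Finset.sum_le_sum_of_subset_of_nonneg hT
              intro j _ _; by_cases h : j = 0 <;> simp [h] <;> positivity
          _ = p := by simp
    · have hT' : T ⊆ {(i : ℕ)} := by rw [if_neg hi, Set.mem_setOf_eq] at hT; exact hT
      have hTe : T = ∅ := by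
        by_contra hne
        obtain ⟨x, hx⟩ := Finset.nonempty_iff_ne_empty.mpr hne
        have hxi : x = (i : ℕ) := by simpa using hT' hx
        have := hTsub hx
        rw [Finset.mem_sdiff] at this
        apply this.2
        rw [Finset.mem_biUnion]
        refine ⟨0, ?_, ?_⟩
        · simp [Fin.pos_iff_ne_zero, hi]
        · have hiv : 1 ≤ (i : ℕ) := by
            rcases Nat.eq_zero_or_pos (i : ℕ) with h | h
            · exact absurd (Fin.ext h) hi
            · exact h
          have hiv2 : (i : ℕ) ≤ q := by omega
          simp [hxi, Finset.mem_Icc, hiv, hiv2]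
      subst hTe
      rw [if_neg hi]
      simp
  all_goals {
    have hsum : ∑ j ∈ Finset.Icc 1 q, (if j = 0 then (p : ℝ) else 1) = q := by
      rw [Finset.sum_congr rfl (fun j hj => by
        simp only [Finset.mem_Icc] at hj
        rw [if_neg (by omega)])]
      simp
    have hS : ∑ i : Fin (q+1), ∑ j ∈ ((fun i : Fin (q+1) =>
        if i = 0 then Finset.Icc 1 q else ∅) i), ((fun j => if j = 0 then (p : ℝ) else 1) j)
        = q := by
      rw [Fin.sum_univ_succ]
      dsimp only
      rw [if_pos rfl, hsum]
      rw [Finset.sum_congr rfl (fun i _ => by rw [if_neg (Fin.succ_ne_zero i)])]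
      simp
    have hO : ∑ i : Fin (q+1), ∑ j ∈ ((fun i : Fin (q+1) => ({(i : ℕ)} : Finset ℕ)) i),
        ((fun j => if j = 0 then (p : ℝ) else 1) j) = p + q := by
      rw [Fin.sum_univ_succ]
      dsimp only
      rw [Finset.sum_singleton]
      rw [Finset.sum_congr rfl (fun i _ => by
        rw [Finset.sum_singleton, if_neg (by simp [Fin.val_succ])])]
      simp
    rw [hS]
    try rw [hO]
    try positivity
    try rfl
  }
end

section
/- For all integers p ≥ q ≥ 1 and every integer n ≥ 1, there exists a symmetric set packing game with n players (a single common downward-closed collection 𝒮_i = 𝒮 for all players), a feasible profile O, and a (p/q)-approximate Nash equilibrium S with w(S) > 0, such that w(O)/w(S) = (p·n + q·(n−1))/(q·n); consequently, as n → ∞, the price of anarchy of symmetric set packing games under α-approximate Nash equilibria with α = p/q is at least α+1. -/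
/-- For all integers `p ≥ q ≥ 1` and every integer `n ≥ 1`, there
exists a symmetric set packing game with `n` players (a single common downward-closed
collection `𝒮` for all players), a feasible profile `O`, and a `(p/q)`-approximate
Nash equilibrium `S` with `w(S) > 0`, such that
`w(O)/w(S) = (p·n + q·(n−1))/(q·n)`; consequently, as `n → ∞`, the price of anarchy of
symmetric set packing games under `α`-approximate Nash equilibria with `α = p/q` is at
least `α+1`. -/
theorem symmetric_set_packing_poa_lower_bound
    (p q n : ℕ) (hq : 1 ≤ q) (hpq : q ≤ p) (hn : 1 ≤ n) :
    ∃ (J : Finset ℕ) (w : ℕ → ℝ) (𝒮 : Set (Finset ℕ))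
      (O S : Fin n → Finset ℕ),
      (∀ j ∈ J, 0 ≤ w j) ∧
      (∀ A ∈ 𝒮, A ⊆ J) ∧
      (∀ A ∈ 𝒮, ∀ T, T ⊆ A → T ∈ 𝒮) ∧
      (∅ ∈ 𝒮) ∧
      -- O is a feasible profile (all players share the collection 𝒮)
      (∀ i, O i ∈ 𝒮) ∧
      (∀ i k, i ≠ k → Disjoint (O i) (O k)) ∧
      -- S is a feasible profile
      (∀ i, S i ∈ 𝒮) ∧
      (∀ i k, i ≠ k → Disjoint (S i) (S k)) ∧
      -- S is a (p/q)-approximate Nash equilibrium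
      (∀ i, ∀ T ∈ 𝒮, (∀ k, k ≠ i → Disjoint T (S k)) →
        ∑ j ∈ T, w j ≤ ((p : ℝ) / q) * ∑ j ∈ S i, w j) ∧
      -- positive value and ratio exactly (p·n + q·(n−1))/(q·n)
      0 < ∑ i, ∑ j ∈ S i, w j ∧
      (∑ i, ∑ j ∈ O i, w j) / (∑ i, ∑ j ∈ S i, w j)
        = ((p : ℝ) * n + q * ((n : ℝ) - 1)) / (q * n) := by
  classical
  have hq0 : (0:ℝ) < q := by exact_mod_cast hq
  have hpq' : (q:ℝ) ≤ p := by exact_mod_cast hpq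
  set w : ℕ → ℝ := fun j =>
    if j < n then (q:ℝ) else if j = n then (p:ℝ) - q else if j < 2*n then (p:ℝ) else 0
    with hwdef
  have hwnn : ∀ j, 0 ≤ w j := by
    intro j
    simp only [hwdef]
    split_ifs <;> first | positivity | linarith
  have hwx : ∀ j < n, w j = q := by intro j hj; simp [hwdef, hj]
  have hwb0 : w n = (p:ℝ) - q := by simp [hwdef]
  have hwb : ∀ j, n < j → j < 2*n → w j = p := by
    intro j h1 h2
    simp only [hwdef]
    rw [if_neg (by omega), if_neg (by omega), if_pos h2]
  refine ⟨Finset.range (2*n), w,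
    {T | T ⊆ Finset.range (n+1)} ∪ {T | ∃ j, 1 ≤ j ∧ j < n ∧ T ⊆ {n + j}},
    (fun i => if i.val = 0 then Finset.range (n+1) else {n + i.val}),
    (fun i => {i.val}), ?_, ?_, ?_, ?_, ?_, ?_, ?_, ?_, ?_, ?_, ?_⟩
  · intro j _; exact hwnn j
  · rintro A (hA | ⟨j, hj1, hj2, hA⟩)
    · exact hA.trans (Finset.range_subset_range.mpr (by omega))
    · exact hA.trans (by intro x hx; simp at hx; simp [hx]; omega)
  · rintro A (hA | ⟨j, hj1, hj2, hA⟩) T hT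
    · exact Or.inl (hT.trans hA)
    · exact Or.inr ⟨j, hj1, hj2, hT.trans hA⟩
  · exact Or.inl (Finset.empty_subset _)
  · intro i
    by_cases h : i.val = 0
    · simp only [h, if_pos]; exact Or.inl (Finset.Subset.refl _)
    · simp only [if_neg h]
      exact Or.inr ⟨i.val, by omega, i.isLt, le_refl _⟩
  · intro i k hik
    have hvk : i.val ≠ k.val := fun h => hik (Fin.ext h)
    dsimp only
    by_cases hi : i.val = 0
    · rw [if_pos hi]
      by_cases hk : k.val = 0
      · exact absurd (hi.trans hk.symm) hvk
      · rw [if_neg hk]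
        simp only [Finset.disjoint_singleton_right, Finset.mem_range]; omega
    · rw [if_neg hi]
      by_cases hk : k.val = 0
      · rw [if_pos hk]
        simp only [Finset.disjoint_singleton_left, Finset.mem_range]; omega
      · rw [if_neg hk]
        simp only [Finset.disjoint_singleton_right, Finset.mem_singleton]; omega
  · intro i
    exact Or.inl (by intro x hx; simp at hx; simp [hx])
  · intro i k hik
    have hvk : i.val ≠ k.val := fun h => hik (Fin.ext h)
    exact Finset.disjoint_singleton.mpr hvk
  · -- Nash equilibrium
    intro i T hT hdis
    have hSi : ∑ j ∈ ({i.val} : Finset ℕ), w j = q := by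
      rw [Finset.sum_singleton, hwx i.val i.isLt]
    simp only [hSi]
    rw [div_mul_cancel₀ _ (ne_of_gt hq0)]
    rcases hT with hT | ⟨j, hj1, hj2, hT⟩
    · -- T ⊆ range (n+1); show T ⊆ {i.val, n}
      have hsub : T ⊆ insert i.val {n} := by
        intro x hx
        have hx1 : x < n + 1 := Finset.mem_range.mp (hT hx)
        by_cases hxn : x = n
        · simp [hxn]
        · have hxlt : x < n := by omega
          by_cases hxi : x = i.val
          · simp [hxi]
          · exfalso
            have hk : (⟨x, hxlt⟩ : Fin n) ≠ i := by
              intro h; exact hxi (by simpa using congrArg Fin.val h)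
            have := Finset.disjoint_left.mp (hdis ⟨x, hxlt⟩ hk) hx
            simp at this
      calc ∑ j ∈ T, w j ≤ ∑ j ∈ insert i.val ({n} : Finset ℕ), w j :=
            Finset.sum_le_sum_of_subset_of_nonneg hsub (fun j _ _ => hwnn j)
        _ = w i.val + w n := by
            rw [Finset.sum_insert (by simp; omega), Finset.sum_singleton]
        _ = p := by rw [hwx i.val i.isLt, hwb0]; ring
    · calc ∑ j ∈ T, w j ≤ ∑ j ∈ ({n + j} : Finset ℕ), w j :=
            Finset.sum_le_sum_of_subset_of_nonneg hT (fun j _ _ => hwnn j)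
        _ = p := by rw [Finset.sum_singleton, hwb (n+j) (by omega) (by omega)]
  · -- positivity and the ratio
    have hS : ∑ i : Fin n, ∑ j ∈ ({i.val} : Finset ℕ), w j = (q:ℝ) * n := by
      have : ∀ i : Fin n, ∑ j ∈ ({i.val} : Finset ℕ), w j = (q:ℝ) := by
        intro i; rw [Finset.sum_singleton, hwx i.val i.isLt]
      rw [Finset.sum_congr rfl (fun i _ => this i), Finset.sum_const]
      simp [mul_comm]
    rw [hS]
    positivity
  · obtain ⟨m, rfl⟩ : ∃ m, n = m + 1 := ⟨n - 1, by omega⟩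
    have hS : ∑ i : Fin (m+1), ∑ j ∈ ({i.val} : Finset ℕ), w j = (q:ℝ) * (m+1) := by
      have h1 : ∀ i : Fin (m+1), ∑ j ∈ ({i.val} : Finset ℕ), w j = (q:ℝ) := by
        intro i; rw [Finset.sum_singleton, hwx i.val i.isLt]
      rw [Finset.sum_congr rfl (fun i _ => h1 i), Finset.sum_const]
      simp [mul_comm]
    have hrange : ∑ j ∈ Finset.range (m+1+1), w j = (q:ℝ) * (m+1) + ((p:ℝ) - q) := by
      rw [Finset.sum_range_succ, hwb0]
      congr 1
      have : ∀ j ∈ Finset.range (m+1), w j = (q:ℝ) := by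
        intro j hj; exact hwx j (Finset.mem_range.mp hj)
      rw [Finset.sum_congr rfl this, Finset.sum_const]
      simp [mul_comm]
    have hO : ∑ i : Fin (m+1), ∑ j ∈
        (if i.val = 0 then Finset.range (m+1+1) else ({(m+1) + i.val} : Finset ℕ)), w j
        = (p:ℝ) * (m+1) + (q:ℝ) * m := by
      rw [Fin.sum_univ_succ]
      simp only [Fin.val_zero, eq_self_iff_true, if_true]
      have h2 : ∀ i : Fin m, ∑ j ∈
          (if (i.succ : Fin (m+1)).val = 0 then Finset.range (m+1+1)
            else ({(m+1) + (i.succ : Fin (m+1)).val} : Finset ℕ)), w j = (p:ℝ) := by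
        intro i
        have hs : (i.succ : Fin (m+1)).val = i.val + 1 := rfl
        rw [if_neg (by omega), Finset.sum_singleton, hs,
          hwb ((m+1) + (i.val+1)) (by omega) (by omega)]
      rw [Finset.sum_congr rfl (fun i _ => h2 i), Finset.sum_const, hrange]
      simp only [Finset.card_univ, Fintype.card_fin, nsmul_eq_mul]
      push_cast; ring
    rw [hS, hO]
    congr 1 <;> push_cast <;> ring
end

section
/- For every real α ≥ 1 and every ε > 0 there exist an integer n ≥ 1, a symmetric set packing game with n players (a single common downward-closed collection 𝒮_i = 𝒮 for all players), a feasible profile O, and a feasible profile S with w(S) > 0 satisfying the sequential α-greedy condition with respect to the player order 1,…,n, such that w(O)/w(S) ≥ e^{1/α}/(e^{1/α}−1) − ε; hence the sequential price of anarchy of symmetric set packing games under α-approximate subgame perfect equilibria is at least e^{1/α}/(e^{1/α}−1). -/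
open Finset

namespace SPoALower

/-- greedy player `k`'s set: one item from each optimal set, at "level" `k`. -/
def Sset (n k : ℕ) : Finset ℕ := (Finset.range n).image (fun j => j * n + k)

/-- the part of optimal set `j` remaining after greedy players `0,…,i-1` moved. -/
def OH (n i j : ℕ) : Finset ℕ :=
  insert (n * n + j) ((Finset.Ico i n).image (fun k => j * n + k))

noncomputable def wt (n : ℕ) (x : ℝ) (m : ℕ) : ℝ :=
  if m < n * n then (x / n) * (1 - x / n) ^ (m % n) else (1 - x / n) ^ n

lemma aux_geom (x nn A : ℝ) (hx : x ≠ 0) (hn : nn ≠ 0) :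
    x * ((A - 1) / -(x / nn)) = nn * (1 - A) := by
  rw [div_neg, mul_neg, div_div_eq_mul_div, ← mul_div_assoc,
    mul_div_cancel_left₀ _ hx]
  ring

lemma enc_lt {n j k : ℕ} (hj : j < n) (hk : k < n) : j * n + k < n * n := by nlinarith

lemma enc_mod {n k : ℕ} (j : ℕ) (hk : k < n) : (j * n + k) % n = k := by
  rw [add_comm, Nat.add_mul_mod_self_right, Nat.mod_eq_of_lt hk]

lemma enc_div {n k : ℕ} (j : ℕ) (hn : 0 < n) (hk : k < n) : (j * n + k) / n = j := by
  rw [add_comm, Nat.add_mul_div_right _ _ hn, Nat.div_eq_of_lt hk, zero_add]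

lemma enc_inj {n j j' k k' : ℕ} (hn : 0 < n) (hk : k < n) (hk' : k' < n)
    (h : j * n + k = j' * n + k') : j = j' ∧ k = k' := by
  have hd : j = j' := by
    have := congrArg (· / n) h
    simpa [enc_div j hn hk, enc_div j' hn hk'] using this
  subst hd
  exact ⟨rfl, by omega⟩

lemma wt_enc {n : ℕ} (x : ℝ) {j k : ℕ} (hj : j < n) (hk : k < n) :
    wt n x (j * n + k) = (x / n) * (1 - x / n) ^ k := by
  rw [wt, if_pos (enc_lt hj hk), enc_mod j hk]

lemma wt_b {n : ℕ} (x : ℝ) (j : ℕ) : wt n x (n * n + j) = (1 - x / n) ^ n := by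
  rw [wt, if_neg (by omega)]

lemma wt_nonneg {n : ℕ} {x : ℝ} (hx0 : 0 ≤ x) (hxn : x / n ≤ 1) (m : ℕ) :
    0 ≤ wt n x m := by
  have hq : (0:ℝ) ≤ 1 - x / n := by linarith
  have hxn0 : (0:ℝ) ≤ x / n := by positivity
  rw [wt]; split <;> positivity

lemma sum_Sset {n : ℕ} (x : ℝ) (hn : 0 < n) {k : ℕ} (hk : k < n) :
    ∑ m ∈ Sset n k, wt n x m = x * (1 - x / n) ^ k := by
  rw [Sset, Finset.sum_image (by
    intro a _ b _ hab
    exact (enc_inj hn hk hk hab).1)]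
  rw [Finset.sum_congr rfl (fun j hj => wt_enc x (Finset.mem_range.1 hj) hk)]
  rw [Finset.sum_const, Finset.card_range, nsmul_eq_mul]
  have hn' : (n:ℝ) ≠ 0 := Nat.cast_ne_zero.2 hn.ne'
  field_simp

lemma sum_OH {n : ℕ} {x : ℝ} (hn : 0 < n) (hx : x / (n:ℝ) ≠ 0) {i j : ℕ}
    (hi : i ≤ n) (hj : j < n) :
    ∑ m ∈ OH n i j, wt n x m = (1 - x / n) ^ i := by
  have hq1 : (1 - x / n) ≠ 1 := by
    intro h; apply hx; linarith [h]
  have hnm : n * n + j ∉ (Finset.Ico i n).image (fun k => j * n + k) := by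
    intro h
    obtain ⟨k, hkmem, hke⟩ := Finset.mem_image.1 h
    have hkn : k < n := (Finset.mem_Ico.1 hkmem).2
    have := enc_lt hj hkn
    omega
  rw [OH, Finset.sum_insert hnm, wt_b, Finset.sum_image (by
    intro a ha b hb hab
    exact (enc_inj hn (Finset.mem_Ico.1 ha).2 (Finset.mem_Ico.1 hb).2 hab).2)]
  rw [Finset.sum_congr rfl (fun k hk => wt_enc x hj (Finset.mem_Ico.1 hk).2)]
  rw [← Finset.mul_sum, geom_sum_Ico hq1 hi]
  have h1 : (1 - x / n) - 1 = -(x / n) := by ring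
  rw [h1]
  generalize (1 - x / (n:ℝ)) ^ n = A
  generalize (1 - x / (n:ℝ)) ^ i = B
  have hx0 : x ≠ 0 := fun h => hx (by simp [h])
  have hn0 : (n:ℝ) ≠ 0 := Nat.cast_ne_zero.2 hn.ne'
  field_simp
  ring

end SPoALower


open SPoALower

/-- For every real `α ≥ 1` and every `ε > 0` there exist an integer
`n ≥ 1`, a symmetric set packing game with `n` players (a single common downward-closed
collection `𝒮` for all players), a feasible profile `O`, and a feasible profile `S`
with `w(S) > 0` satisfying the sequential `α`-greedy condition with respect to the
player order `1,…,n`, such that `w(O)/w(S) ≥ e^{1/α}/(e^{1/α}−1) − ε`; hence the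
sequential price of anarchy of symmetric set packing games under `α`-approximate
subgame perfect equilibria is at least `e^{1/α}/(e^{1/α}−1)`. -/
theorem symmetric_set_packing_seq_poa_lower_bound
    (α : ℝ) (hα : 1 ≤ α) (ε : ℝ) (hε : 0 < ε) :
    ∃ (n : ℕ), 1 ≤ n ∧
    ∃ (J : Finset ℕ) (w : ℕ → ℝ) (𝒮 : Set (Finset ℕ))
      (O S : Fin n → Finset ℕ),
      (∀ j ∈ J, 0 ≤ w j) ∧
      (∀ A ∈ 𝒮, A ⊆ J) ∧
      (∀ A ∈ 𝒮, ∀ T, T ⊆ A → T ∈ 𝒮) ∧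
      (∅ ∈ 𝒮) ∧
      -- O is a feasible profile (all players share the collection 𝒮)
      (∀ i, O i ∈ 𝒮) ∧
      (∀ i k, i ≠ k → Disjoint (O i) (O k)) ∧
      -- S is a feasible profile
      (∀ i, S i ∈ 𝒮) ∧
      (∀ i k, i ≠ k → Disjoint (S i) (S k)) ∧
      -- S satisfies the sequential α-greedy condition w.r.t. the order 1,…,n
      (∀ i, ∀ T ∈ 𝒮, T ⊆ J \ ((Finset.univ.filter (fun j => j < i)).biUnion S) →
        ∑ j ∈ T, w j ≤ α * ∑ j ∈ S i, w j) ∧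
      -- positive value and ratio at least e^{1/α}/(e^{1/α}−1) − ε
      0 < ∑ i, ∑ j ∈ S i, w j ∧
      (∑ i, ∑ j ∈ O i, w j) / (∑ i, ∑ j ∈ S i, w j)
        ≥ Real.exp (1 / α) / (Real.exp (1 / α) - 1) - ε := by
  classical
  have hα0 : (0:ℝ) < α := lt_of_lt_of_le one_pos hα
  set x : ℝ := 1 / α with hxdef
  have hx0 : 0 < x := by positivity
  have hx1 : x ≤ 1 := (div_le_one hα0).2 hα
  have hex : Real.exp (-x) < 1 := Real.exp_lt_one_iff.2 (by linarith)
  have hE1 : 1 < Real.exp x := Real.one_lt_exp_iff.2 hx0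
  have hL : Real.exp x / (Real.exp x - 1) = (1 - Real.exp (-x))⁻¹ := by
    rw [Real.exp_neg]
    have h1 : Real.exp x ≠ 0 := (Real.exp_pos x).ne'
    have h2 : Real.exp x - 1 ≠ 0 := by linarith
    field_simp
  have hne : (1 - Real.exp (-x)) ≠ 0 := by linarith
  have hT2 : Filter.Tendsto (fun n : ℕ => (1 - (1 + (-x)/(n:ℝ))^n)⁻¹) Filter.atTop
      (nhds ((1 - Real.exp (-x))⁻¹)) :=
    ((tendsto_const_nhds.sub (Real.tendsto_one_add_div_pow_exp (-x))).inv₀ hne)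
  have hev := (hT2.eventually (eventually_gt_nhds
      (show Real.exp x / (Real.exp x - 1) - ε < (1 - Real.exp (-x))⁻¹ by
        rw [← hL]; linarith))).and (Filter.eventually_ge_atTop 1)
  obtain ⟨n, hrat, hn1⟩ := hev.exists
  have hn0 : 0 < n := hn1
  have hnR : (0:ℝ) < n := Nat.cast_pos.2 hn0
  have hnne : (n:ℝ) ≠ 0 := hnR.ne'
  have hxn1 : x / n ≤ 1 := by
    rw [div_le_one hnR]
    calc x ≤ 1 := hx1
    _ ≤ (n:ℝ) := by exact_mod_cast hn1
  have hxn0' : (0:ℝ) < x / n := by positivity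
  have hxn0 : x / (n:ℝ) ≠ 0 := hxn0'.ne'
  set q : ℝ := 1 - x / n with hqdef
  have hq0 : 0 ≤ q := by simp only [hqdef]; linarith
  have hq1 : q < 1 := by simp only [hqdef]; linarith
  have hqn1 : q ^ n < 1 := pow_lt_one₀ hq0 hq1 hn0.ne'
  have hqeq : 1 + (-x) / (n:ℝ) = q := by simp only [hqdef]; ring
  rw [hqeq] at hrat
  refine ⟨n, hn1, Finset.range (n*n+n), wt n x,
    {T | (∃ j < n, T ⊆ OH n 0 j) ∨ (∃ k < n, T ⊆ Sset n k)},
    (fun i => OH n 0 i.val), (fun i => Sset n i.val),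
    ?_, ?_, ?_, ?_, ?_, ?_, ?_, ?_, ?_, ?_, ?_⟩
  · exact fun m _ => wt_nonneg hx0.le hxn1 m
  · -- subsets of J
    have hOJ : ∀ j, j < n → OH n 0 j ⊆ Finset.range (n*n+n) := by
      intro j hj m hm
      rcases Finset.mem_insert.1 hm with h | h
      · exact Finset.mem_range.2 (by omega)
      · obtain ⟨k, hk, he⟩ := Finset.mem_image.1 h
        have := enc_lt hj (Finset.mem_Ico.1 hk).2
        exact Finset.mem_range.2 (by omega)
    have hSJ : ∀ k, k < n → Sset n k ⊆ Finset.range (n*n+n) := by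
      intro k hk m hm
      obtain ⟨j, hj, he⟩ := Finset.mem_image.1 hm
      have := enc_lt (Finset.mem_range.1 hj) hk
      exact Finset.mem_range.2 (by omega)
    rintro A (⟨j, hj, hs⟩ | ⟨k, hk, hs⟩)
    · exact hs.trans (hOJ j hj)
    · exact hs.trans (hSJ k hk)
  · rintro A (⟨j, hj, hs⟩ | ⟨k, hk, hs⟩) T hTA
    · exact Or.inl ⟨j, hj, hTA.trans hs⟩
    · exact Or.inr ⟨k, hk, hTA.trans hs⟩
  · exact Or.inl ⟨0, hn0, Finset.empty_subset _⟩
  · exact fun i => Or.inl ⟨i.val, i.isLt, subset_rfl⟩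
  · -- O disjoint
    intro i k hik
    rw [Finset.disjoint_left]
    intro m hmi hmk
    rcases Finset.mem_insert.1 hmi with h1 | h1 <;>
      rcases Finset.mem_insert.1 hmk with h2 | h2
    · exact hik (Fin.ext (by omega))
    · obtain ⟨t, ht, he⟩ := Finset.mem_image.1 h2
      have := enc_lt k.isLt (Finset.mem_Ico.1 ht).2
      omega
    · obtain ⟨t, ht, he⟩ := Finset.mem_image.1 h1
      have := enc_lt i.isLt (Finset.mem_Ico.1 ht).2
      omega
    · obtain ⟨t, ht, he⟩ := Finset.mem_image.1 h1
      obtain ⟨t', ht', he'⟩ := Finset.mem_image.1 h2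
      have := enc_inj hn0 (Finset.mem_Ico.1 ht).2 (Finset.mem_Ico.1 ht').2
        (he.trans he'.symm)
      exact hik (Fin.ext this.1)
  · exact fun i => Or.inr ⟨i.val, i.isLt, subset_rfl⟩
  · -- S disjoint
    intro i k hik
    rw [Finset.disjoint_left]
    intro m hmi hmk
    obtain ⟨j, hj, he⟩ := Finset.mem_image.1 hmi
    obtain ⟨j', hj', he'⟩ := Finset.mem_image.1 hmk
    have := enc_inj hn0 i.isLt k.isLt (he.trans he'.symm)
    exact hik (Fin.ext this.2)
  · -- greedy condition
    intro i T hT hTsub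
    have hRHS : α * ∑ m ∈ Sset n i.val, wt n x m = q ^ (i.val) := by
      rw [sum_Sset x hn0 i.isLt, ← mul_assoc,
        show α * x = 1 by rw [hxdef]; field_simp, one_mul]
    rw [hRHS]
    have hblock : ∀ j k, j < n → k < n → (j*n+k) ∈ T → i.val ≤ k := by
      intro j k hj hk hmem
      by_contra hik
      push_neg at hik
      have hnb := (Finset.mem_sdiff.1 (hTsub hmem)).2
      apply hnb
      refine Finset.mem_biUnion.2 ⟨⟨k, lt_trans hik i.isLt⟩,
        Finset.mem_filter.2 ⟨Finset.mem_univ _, hik⟩,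
        Finset.mem_image.2 ⟨j, Finset.mem_range.2 hj, rfl⟩⟩
    rcases hT with ⟨j, hj, hTO⟩ | ⟨k, hk, hTS⟩
    · have hsub2 : T ⊆ OH n i.val j := by
        intro m hm
        rcases Finset.mem_insert.1 (hTO hm) with h1 | h1
        · exact Finset.mem_insert.2 (Or.inl h1)
        · obtain ⟨t, htm, hte⟩ := Finset.mem_image.1 h1
          have htn : t < n := (Finset.mem_Ico.1 htm).2
          have hit : i.val ≤ t := hblock j t hj htn (hte ▸ hm)
          exact Finset.mem_insert.2 (Or.inr
            (Finset.mem_image.2 ⟨t, Finset.mem_Ico.2 ⟨hit, htn⟩, hte⟩))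
      calc ∑ m ∈ T, wt n x m ≤ ∑ m ∈ OH n i.val j, wt n x m :=
            Finset.sum_le_sum_of_subset_of_nonneg hsub2
              (fun m _ _ => wt_nonneg hx0.le hxn1 m)
        _ = q ^ (i.val) := sum_OH hn0 hxn0 (le_of_lt i.isLt) hj
    · by_cases hik : i.val ≤ k
      · have h1 : ∑ m ∈ T, wt n x m ≤ ∑ m ∈ Sset n k, wt n x m :=
          Finset.sum_le_sum_of_subset_of_nonneg hTS
            (fun m _ _ => wt_nonneg hx0.le hxn1 m)
        rw [sum_Sset x hn0 hk] at h1
        have h2 : x * q ^ k ≤ q ^ (i.val) := by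
          calc x * q ^ k ≤ 1 * q ^ (i.val) :=
                mul_le_mul hx1 (pow_le_pow_of_le_one hq0 hq1.le hik)
                  (pow_nonneg hq0 k) zero_le_one
          _ = q ^ (i.val) := one_mul _
        linarith
      · have hTe : T = ∅ := by
          rw [Finset.eq_empty_iff_forall_notMem]
          intro m hm
          obtain ⟨jj, hjj, he⟩ := Finset.mem_image.1 (hTS hm)
          exact hik (hblock jj k (Finset.mem_range.1 hjj) hk (he ▸ hm))
        rw [hTe, Finset.sum_empty]
        exact pow_nonneg hq0 _
  · -- positivity
    have hSsum : ∑ i : Fin n, ∑ m ∈ Sset n i.val, wt n x m = n * (1 - q ^ n) := by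
      rw [Finset.sum_congr rfl (fun i _ => sum_Sset x hn0 i.isLt)]
      rw [Fin.sum_univ_eq_sum_range (fun i => x * q ^ i) n, ← Finset.mul_sum,
        geom_sum_eq hq1.ne n, show q - 1 = -(x / n) by rw [hqdef]; ring]
      generalize q ^ n = A
      exact aux_geom x n A hx0.ne' hnne
    rw [hSsum]
    exact mul_pos hnR (by linarith)
  · -- ratio
    have hSsum : ∑ i : Fin n, ∑ m ∈ Sset n i.val, wt n x m = n * (1 - q ^ n) := by
      rw [Finset.sum_congr rfl (fun i _ => sum_Sset x hn0 i.isLt)]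
      rw [Fin.sum_univ_eq_sum_range (fun i => x * q ^ i) n, ← Finset.mul_sum,
        geom_sum_eq hq1.ne n, show q - 1 = -(x / n) by rw [hqdef]; ring]
      generalize q ^ n = A
      exact aux_geom x n A hx0.ne' hnne
    have hOsum : ∑ i : Fin n, ∑ m ∈ OH n 0 i.val, wt n x m = n := by
      rw [Finset.sum_congr rfl (fun i _ => sum_OH hn0 hxn0 (Nat.zero_le n) i.isLt)]
      simp
    rw [hSsum, hOsum]
    have hd0 : (0:ℝ) < 1 - q ^ n := by linarith
    have hkey : (n:ℝ) / (n * (1 - q ^ n)) = (1 - q ^ n)⁻¹ := by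
      rw [show (n:ℝ) / ((n:ℝ) * (1 - q ^ n)) = ((n:ℝ) * 1) / ((n:ℝ) * (1 - q ^ n)) by
        rw [mul_one], mul_div_mul_left 1 _ hnne, one_div]
    rw [hkey]
    exact le_of_lt hrat
end

section
/- Consider a symmetric set packing game with multiplicities x_1,…,x_n ≥ 1 and x = Σ_i x_i, a real α ≥ 1, and a feasible profile S = (S_1,…,S_n). Fix a player i and let W = J \ (S_1 ∪ … ∪ S_{i−1}). If α·w(S_i) ≥ w(T) for every T ⊆ W that is a union of x_i pairwise disjoint members of 𝒮, then w(S_i) ≥ (x_i/(x·α))·OPT(W). -/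
lemma top_k_sum {β : Type*} [DecidableEq β] (u : Finset β) (v : β → ℝ) (k : ℕ)
    (hk : k ≤ u.card) :
    ∃ s, s ⊆ u ∧ s.card = k ∧
      (k : ℝ) * ∑ b ∈ u, v b ≤ (u.card : ℝ) * ∑ a ∈ s, v a := by
  have hne : (Finset.powersetCard k u).Nonempty := Finset.powersetCard_nonempty.2 hk
  obtain ⟨s, hs, hmax⟩ := Finset.exists_max_image _ (fun s => ∑ a ∈ s, v a) hne
  rw [Finset.mem_powersetCard] at hs
  obtain ⟨hsu, hcard⟩ := hs
  refine ⟨s, hsu, hcard, ?_⟩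
  -- key: every element of s dominates every element of u \ s
  have key : ∀ a ∈ s, ∀ b ∈ u \ s, v b ≤ v a := by
    intro a ha b hb
    rw [Finset.mem_sdiff] at hb
    obtain ⟨hbu, hbs⟩ := hb
    set s' := insert b (s.erase a) with hs'
    have hbs' : b ∉ s.erase a := fun h => hbs (Finset.mem_of_mem_erase h)
    have hk1 : 1 ≤ k := hcard ▸ Finset.one_le_card.2 ⟨a, ha⟩
    have hcard' : s'.card = k := by
      rw [hs', Finset.card_insert_of_notMem hbs', Finset.card_erase_of_mem ha, hcard]
      omega
    have hsub' : s' ⊆ u := by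
      intro c hc
      rw [hs', Finset.mem_insert] at hc
      rcases hc with h | h
      · exact h ▸ hbu
      · exact hsu (Finset.mem_of_mem_erase h)
    have hle := hmax s' (Finset.mem_powersetCard.2 ⟨hsub', hcard'⟩)
    have hsum' : ∑ a ∈ s', v a = v b + (∑ a ∈ s, v a - v a) := by
      rw [hs', Finset.sum_insert hbs', Finset.sum_erase_eq_sub ha]
    rw [hsum'] at hle
    linarith
  have h1 : (k : ℝ) * ∑ b ∈ u \ s, v b ≤ ((u.card - k : ℕ) : ℝ) * ∑ a ∈ s, v a := by
    have hcd : (u \ s).card = u.card - k := by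
      rw [Finset.card_sdiff_of_subset hsu, hcard]
    calc (k : ℝ) * ∑ b ∈ u \ s, v b = ∑ a ∈ s, ∑ b ∈ u \ s, v b := by
          rw [Finset.sum_const, nsmul_eq_mul, hcard]
      _ ≤ ∑ a ∈ s, ∑ b ∈ u \ s, v a := by
          apply Finset.sum_le_sum
          intro a ha
          apply Finset.sum_le_sum
          intro b hb
          exact key a ha b hb
      _ = ((u.card - k : ℕ) : ℝ) * ∑ a ∈ s, v a := by
          simp only [Finset.sum_const, nsmul_eq_mul, hcd]
          rw [Finset.mul_sum]
  have hsplit : ∑ b ∈ u, v b = ∑ a ∈ s, v a + ∑ b ∈ u \ s, v b := by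
    rw [add_comm, Finset.sum_sdiff hsu]
  have hck : ((u.card - k : ℕ) : ℝ) = (u.card : ℝ) - k := by
    rw [Nat.cast_sub hk]
  rw [hsplit]
  rw [hck] at h1
  nlinarith [h1]

/-- `IsUnionOf 𝒮 m T` says that `T` is a union of `m` pairwise disjoint members
of the collection `𝒮`. -/
def IsUnionOf {ι : Type} [DecidableEq ι] (𝒮 : Set (Finset ι)) (m : ℕ)
    (T : Finset ι) : Prop :=
  ∃ f : Fin m → Finset ι, (∀ a, f a ∈ 𝒮) ∧
    (∀ a b, a ≠ b → Disjoint (f a) (f b)) ∧ T = Finset.univ.biUnion f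

/-- In a symmetric set packing game with multiplicities
`x_1,…,x_n ≥ 1` and `x = Σ_i x_i`, for a real `α ≥ 1` and a feasible profile
`S = (S_1,…,S_n)`: fix a player `i` and let `W = J \ (S_1 ∪ … ∪ S_{i−1})`. If
`α·w(S_i) ≥ w(T)` for every `T ⊆ W` that is a union of `x_i` pairwise disjoint
members of `𝒮`, then `w(S_i) ≥ (x_i/(x·α))·OPT(W)`, where `OPT(W)` is the maximum of
`w(T)` over all `T ⊆ W` that are unions of `x` pairwise disjoint members of `𝒮`. -/
theorem symmetric_set_packing_greedy_player_bound
    {ι : Type} [DecidableEq ι] (J : Finset ι) (w : ι → ℝ)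
    (hw : ∀ j ∈ J, 0 ≤ w j) (n : ℕ)
    (𝒮 : Set (Finset ι))
    (hJ : ∀ A ∈ 𝒮, A ⊆ J)
    (hdc : ∀ A ∈ 𝒮, ∀ T, T ⊆ A → T ∈ 𝒮)
    (hempty : ∅ ∈ 𝒮)
    (x : Fin n → ℕ) (hx : ∀ i, 1 ≤ x i)
    (α : ℝ) (hα : 1 ≤ α)
    (S : Fin n → Finset ι)
    (hS : ∀ i, IsUnionOf 𝒮 (x i) (S i))
    (hSdisj : ∀ i k, i ≠ k → Disjoint (S i) (S k))
    (i : Fin n)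
    (W : Finset ι)
    (hW : W = J \ ((Finset.univ.filter (fun j => j < i)).biUnion S))
    (OPTW : ℝ)
    (hOPT : IsGreatest
      {v : ℝ | ∃ T, T ⊆ W ∧ IsUnionOf 𝒮 (∑ k, x k) T ∧ v = ∑ j ∈ T, w j} OPTW)
    (hgreedy : ∀ T, T ⊆ W → IsUnionOf 𝒮 (x i) T →
      ∑ j ∈ T, w j ≤ α * ∑ j ∈ S i, w j) :
    ((x i : ℝ) / ((∑ k, x k : ℕ) * α)) * OPTW ≤ ∑ j ∈ S i, w j := by
  classical
  set X := ∑ k, x k with hX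
  obtain ⟨hOPTmem, -⟩ := hOPT
  obtain ⟨T, hTW, ⟨f, hf𝒮, hfdisj, hfT⟩, hOPTval⟩ := hOPTmem
  have hxi : x i ≤ X := Finset.single_le_sum (fun k _ => Nat.zero_le _) (Finset.mem_univ i)
  have hXpos : 0 < X := lt_of_lt_of_le (hx i) hxi
  set v : Fin X → ℝ := fun a => ∑ j ∈ f a, w j with hv
  have hsumT : ∑ j ∈ T, w j = ∑ a, v a := by
    rw [hfT]
    exact Finset.sum_biUnion (fun a _ b _ hab => hfdisj a b hab)
  have hcardu : (Finset.univ : Finset (Fin X)).card = X := by simp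
  obtain ⟨s, -, hscard, hsle⟩ := top_k_sum (Finset.univ : Finset (Fin X)) v (x i)
    (by rw [hcardu]; exact hxi)
  rw [hcardu] at hsle
  set T' : Finset ι := s.biUnion f with hT'
  have hT'W : T' ⊆ W := by
    refine subset_trans ?_ hTW
    intro j hj
    rw [hT', Finset.mem_biUnion] at hj
    obtain ⟨a, -, hja⟩ := hj
    rw [hfT, Finset.mem_biUnion]
    exact ⟨a, Finset.mem_univ a, hja⟩
  have hT'union : IsUnionOf 𝒮 (x i) T' := by
    set e := s.orderIsoOfFin hscard with he
    refine ⟨fun a => f (e a), fun a => hf𝒮 _, ?_, ?_⟩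
    · intro a b hab
      exact hfdisj _ _ (fun h => hab (e.injective (Subtype.ext h)))
    · ext j
      simp only [hT', Finset.mem_biUnion, Finset.mem_univ, true_and]
      constructor
      · rintro ⟨c, hc, hj⟩
        exact ⟨e.symm ⟨c, hc⟩, by simpa using hj⟩
      · rintro ⟨a, hj⟩
        exact ⟨(e a : Fin X), (e a).2, hj⟩
  have hsumT' : ∑ j ∈ T', w j = ∑ a ∈ s, v a := by
    rw [hT']
    exact Finset.sum_biUnion (fun a _ b _ hab => hfdisj a b hab)
  have hless := hgreedy T' hT'W hT'union
  rw [hsumT'] at hless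
  have hαpos : (0 : ℝ) < α := lt_of_lt_of_le one_pos hα
  have hXR : (0 : ℝ) < (X : ℝ) := by exact_mod_cast hXpos
  have hchain : (x i : ℝ) * OPTW ≤ (X : ℝ) * (α * ∑ j ∈ S i, w j) := by
    calc (x i : ℝ) * OPTW = (x i : ℝ) * ∑ a, v a := by rw [hOPTval, hsumT]
      _ ≤ (X : ℝ) * ∑ a ∈ s, v a := hsle
      _ ≤ (X : ℝ) * (α * ∑ j ∈ S i, w j) :=
          mul_le_mul_of_nonneg_left hless (le_of_lt hXR)
  rw [div_mul_eq_mul_div, div_le_iff₀ (by positivity)]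
  nlinarith [hchain]
end

section
/- For every real γ ≥ 1 and all integers a ≥ 0 and b ≥ 1 satisfying b/γ ≥ 1 − ((γ−1)/γ)^b (which holds automatically by the companion inequality), it holds that b/γ + ((γ−b)/γ)·(γ^a − (γ−1)^a)/γ^a ≥ (γ^{a+b} − (γ−1)^{a+b})/γ^{a+b}. -/
/-- For every real `γ ≥ 1` and all integers `a ≥ 0` and `b ≥ 1`
satisfying `b/γ ≥ 1 − ((γ−1)/γ)^b` (which holds automatically by the companion
inequality), it holds that
`b/γ + ((γ−b)/γ)·(γ^a − (γ−1)^a)/γ^a ≥ (γ^{a+b} − (γ−1)^{a+b})/γ^{a+b}`. -/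
theorem induction_step_inequality (γ : ℝ) (hγ : 1 ≤ γ) (a b : ℕ) (hb : 1 ≤ b)
    (h : 1 - ((γ - 1) / γ) ^ b ≤ (b : ℝ) / γ) :
    (γ ^ (a + b) - (γ - 1) ^ (a + b)) / γ ^ (a + b) ≤
      (b : ℝ) / γ + ((γ - b) / γ) * ((γ ^ a - (γ - 1) ^ a) / γ ^ a) := by
  have hγ0 : (0:ℝ) < γ := lt_of_lt_of_le one_pos hγ
  have hp : ∀ k : ℕ, (γ ^ k - (γ - 1) ^ k) / γ ^ k = 1 - ((γ - 1) / γ) ^ k := by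
    intro k
    rw [div_pow]
    have hk : (γ:ℝ) ^ k ≠ 0 := pow_ne_zero _ hγ0.ne'
    field_simp
  rw [hp, hp, pow_add]
  have ht : 0 ≤ ((γ - 1) / γ) ^ a := pow_nonneg (div_nonneg (by linarith) hγ0.le) a
  have hbγ : (b:ℝ) / γ = 1 - (γ - b) / γ := by field_simp; ring
  nlinarith [mul_le_mul_of_nonneg_left h ht]
end

section
/- Consider a symmetric set packing game with multiplicities x_1,…,x_n ≥ 1, x = Σ_i x_i, a real α ≥ 1, and set γ = x·α. Let S = (S_1,…,S_n) be a feasible profile such that for every player i and every T ⊆ J \ (S_1 ∪ … ∪ S_{i−1}) that is a union of x_i pairwise disjoint members of 𝒮, α·w(S_i) ≥ w(T). Then for every i = 1,…,n, writing x'_i = x_1 + … + x_i, one has Σ_{j=1}^{i} w(S_j) ≥ ((γ^{x'_i} − (γ−1)^{x'_i})/γ^{x'_i})·OPT(J); in particular w(S) = Σ_{j=1}^{n} w(S_j) ≥ ((γ^x − (γ−1)^x)/γ^x)·OPT(J). -/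
open Finset

lemma exists_top_subset {β : Type*} [DecidableEq β] (v : β → ℝ) :
    ∀ (m : ℕ) (s : Finset β), m ≤ s.card →
      ∃ B ⊆ s, B.card = m ∧ ∀ a ∈ B, ∀ b ∈ s \ B, v b ≤ v a := by
  intro m
  induction m with
  | zero => intro s _; exact ⟨∅, empty_subset s, rfl, by simp⟩
  | succ k ih =>
    intro s hs
    obtain ⟨B, hBs, hBcard, hB⟩ := ih s (le_trans (Nat.le_succ k) hs)
    have hne : (s \ B).Nonempty := by
      rw [sdiff_nonempty]
      intro hsub
      have := card_le_card hsub
      omega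
    obtain ⟨b0, hb0, hmax⟩ := Finset.exists_max_image (s \ B) v hne
    have hb0' := mem_sdiff.mp hb0
    refine ⟨insert b0 B, insert_subset hb0'.1 hBs,
      by rw [card_insert_of_notMem hb0'.2, hBcard], ?_⟩
    intro a ha b hb
    have hb' := mem_sdiff.mp hb
    have hbsB : b ∈ s \ B := mem_sdiff.mpr ⟨hb'.1, fun h => hb'.2 (mem_insert_of_mem h)⟩
    rcases mem_insert.mp ha with rfl | haB
    · exact hmax b hbsB
    · exact hB a haB b hbsB

lemma top_subset_sum {β : Type*} [DecidableEq β] (v : β → ℝ) (s : Finset β)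
    (m : ℕ) (hm : m ≤ s.card) :
    ∃ B ⊆ s, B.card = m ∧ (m : ℝ) * ∑ a ∈ s, v a ≤ (s.card : ℝ) * ∑ a ∈ B, v a := by
  obtain ⟨B, hBs, hBcard, hB⟩ := exists_top_subset v m s hm
  refine ⟨B, hBs, hBcard, ?_⟩
  have hsplit : ∑ a ∈ s, v a = ∑ a ∈ B, v a + ∑ a ∈ s \ B, v a := by
    rw [add_comm, Finset.sum_sdiff hBs]
  have key : (m : ℝ) * ∑ b ∈ s \ B, v b ≤ ((s.card - m : ℕ) : ℝ) * ∑ a ∈ B, v a := by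
    have h1 : (m : ℝ) * ∑ b ∈ s \ B, v b = ∑ a ∈ B, ∑ b ∈ s \ B, v b := by
      rw [Finset.sum_const, hBcard, nsmul_eq_mul]
    have h2 : ∑ a ∈ B, ∑ b ∈ s \ B, v b ≤ ∑ a ∈ B, ∑ _b ∈ s \ B, v a := by
      refine Finset.sum_le_sum fun a ha => Finset.sum_le_sum fun b hb => hB a ha b hb
    have h3 : ∑ a ∈ B, ∑ _b ∈ s \ B, v a = ((s.card - m : ℕ) : ℝ) * ∑ a ∈ B, v a := by
      simp only [Finset.sum_const, nsmul_eq_mul, card_sdiff_of_subset hBs, hBcard]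
      rw [Finset.mul_sum]
    linarith
  have hcast : ((s.card - m : ℕ) : ℝ) = (s.card : ℝ) - m := by
    push_cast [Nat.cast_sub hm]; ring
  rw [hcast, sub_mul] at key
  rw [hsplit]
  linarith

/-- In a symmetric set packing game with multiplicities
`x_1,…,x_n ≥ 1`, `x = Σ_i x_i`, a real `α ≥ 1` and `γ = x·α`: if the feasible profile
`S = (S_1,…,S_n)` satisfies the sequential `α`-greedy condition (for every player `i`
and every `T ⊆ J \ (S_1 ∪ … ∪ S_{i−1})` that is a union of `x_i` pairwise disjoint
members of `𝒮`, `α·w(S_i) ≥ w(T)`), then for every `i`, writing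
`x'_i = x_1 + … + x_i`, one has
`Σ_{j=1}^{i} w(S_j) ≥ ((γ^{x'_i} − (γ−1)^{x'_i})/γ^{x'_i})·OPT(J)`; in particular
`w(S) ≥ ((γ^x − (γ−1)^x)/γ^x)·OPT(J)`. -/
theorem symmetric_set_packing_greedy_cumulative_bound
    {ι : Type} [DecidableEq ι] (J : Finset ι) (w : ι → ℝ)
    (hw : ∀ j ∈ J, 0 ≤ w j) (n : ℕ)
    (𝒮 : Set (Finset ι))
    (hJ : ∀ A ∈ 𝒮, A ⊆ J)
    (hdc : ∀ A ∈ 𝒮, ∀ T, T ⊆ A → T ∈ 𝒮)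
    (hempty : ∅ ∈ 𝒮)
    (x : Fin n → ℕ) (hx : ∀ i, 1 ≤ x i)
    (α : ℝ) (hα : 1 ≤ α)
    (γ : ℝ) (hγ : γ = (∑ k, x k : ℕ) * α)
    (S : Fin n → Finset ι)
    (hS : ∀ i, IsUnionOf 𝒮 (x i) (S i))
    (hSdisj : ∀ i k, i ≠ k → Disjoint (S i) (S k))
    (OPTJ : ℝ)
    (hOPT : IsGreatest
      {v : ℝ | ∃ T, T ⊆ J ∧ IsUnionOf 𝒮 (∑ k, x k) T ∧ v = ∑ j ∈ T, w j} OPTJ)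
    (hgreedy : ∀ i, ∀ T, T ⊆ J \ ((Finset.univ.filter (fun j => j < i)).biUnion S) →
      IsUnionOf 𝒮 (x i) T → ∑ j ∈ T, w j ≤ α * ∑ j ∈ S i, w j) :
    (∀ i : Fin n,
      ((γ ^ (∑ j ∈ Finset.univ.filter (fun j => j ≤ i), x j)
          - (γ - 1) ^ (∑ j ∈ Finset.univ.filter (fun j => j ≤ i), x j))
        / γ ^ (∑ j ∈ Finset.univ.filter (fun j => j ≤ i), x j)) * OPTJ
        ≤ ∑ j ∈ Finset.univ.filter (fun j => j ≤ i), ∑ t ∈ S j, w t) ∧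
    ((γ ^ (∑ k, x k) - (γ - 1) ^ (∑ k, x k)) / γ ^ (∑ k, x k)) * OPTJ
      ≤ ∑ i, ∑ t ∈ S i, w t := by
  set X := ∑ k, x k with hX
  -- basic facts
  have hSJ : ∀ i, S i ⊆ J := by
    intro i
    obtain ⟨f, hf, _, hfe⟩ := hS i
    rw [hfe]
    exact biUnion_subset.mpr fun a _ => hJ _ (hf a)
  have hwS : ∀ i, 0 ≤ ∑ t ∈ S i, w t :=
    fun i => Finset.sum_nonneg fun j hj => hw j (hSJ i hj)
  have hOPT0 : 0 ≤ OPTJ := by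
    refine hOPT.2 ⟨∅, empty_subset J, ⟨fun _ => ∅, fun _ => hempty,
      fun _ _ _ => disjoint_bot_left, by ext j; simp⟩, by simp⟩
  -- key per-player inequality
  have key : ∀ i : Fin n,
      (x i : ℝ) * (OPTJ - ∑ j ∈ univ.filter (fun j => j < i), ∑ t ∈ S j, w t)
        ≤ γ * ∑ t ∈ S i, w t := by
    intro i
    set U := (univ.filter (fun j => j < i)).biUnion S with hU
    have hUJ : U ⊆ J := biUnion_subset.mpr fun j _ => hSJ j
    have hUP : ∑ t ∈ U, w t = ∑ j ∈ univ.filter (fun j => j < i), ∑ t ∈ S j, w t :=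
      Finset.sum_biUnion (fun a _ b _ hab => hSdisj a b hab)
    obtain ⟨Topt, hToptJ, ⟨f, hf, hfd, hfT⟩, hval⟩ := hOPT.1
    set g : Fin X → Finset ι := fun a => f a \ U with hgdef
    have hg𝒮 : ∀ a, g a ∈ 𝒮 := fun a => hdc (f a) (hf a) _ sdiff_subset
    have hgd : ∀ a b : Fin X, a ≠ b → Disjoint (g a) (g b) :=
      fun a b hab => (hfd a b hab).mono sdiff_subset sdiff_subset
    have hgU : Topt \ U = univ.biUnion g := by
      rw [hfT]
      ext j
      simp only [Finset.mem_sdiff, Finset.mem_biUnion, mem_univ, true_and, hgdef]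
      tauto
    have hsum_g : ∑ a, ∑ t ∈ g a, w t = ∑ t ∈ Topt \ U, w t := by
      rw [hgU]
      exact (Finset.sum_biUnion (fun a _ b _ hab => hgd a b hab)).symm
    have lower : OPTJ - ∑ j ∈ univ.filter (fun j => j < i), ∑ t ∈ S j, w t
        ≤ ∑ a, ∑ t ∈ g a, w t := by
      have hsplit : ∑ t ∈ Topt ∩ U, w t + ∑ t ∈ Topt \ U, w t = ∑ t ∈ Topt, w t :=
        Finset.sum_inter_add_sum_sdiff Topt U w
      have hle : ∑ t ∈ Topt ∩ U, w t ≤ ∑ t ∈ U, w t :=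
        Finset.sum_le_sum_of_subset_of_nonneg inter_subset_right
          (fun j hj _ => hw j (hUJ hj))
      rw [hsum_g]
      rw [hval] at *
      linarith [hUP ▸ hle]
    have hxX : x i ≤ X := Finset.single_le_sum (f := x) (fun k _ => Nat.zero_le _) (mem_univ i)
    obtain ⟨B, hBu, hBcard, hBsum⟩ := top_subset_sum (fun a => ∑ t ∈ g a, w t)
      (univ : Finset (Fin X)) (x i) (by simpa using hxX)
    set T := B.biUnion g with hT
    have hTsum : ∑ t ∈ T, w t = ∑ a ∈ B, ∑ t ∈ g a, w t :=
      Finset.sum_biUnion (fun a _ b _ hab => hgd a b hab)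
    have hTunion : IsUnionOf 𝒮 (x i) T := by
      have e : B ≃ Fin (x i) := B.equivFinOfCardEq hBcard
      refine ⟨fun k => g (e.symm k).1, fun k => hg𝒮 _, ?_, ?_⟩
      · intro a b hab
        exact hgd _ _ fun h => hab (e.symm.injective (Subtype.ext h))
      · ext j
        simp only [hT, mem_biUnion, mem_univ, true_and]
        constructor
        · rintro ⟨a, haB, hj⟩
          exact ⟨e ⟨a, haB⟩, by simpa using hj⟩
        · rintro ⟨k, hj⟩
          exact ⟨(e.symm k).1, (e.symm k).2, hj⟩
    have hTsub : T ⊆ J \ U :=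
      biUnion_subset.mpr fun a _ => Finset.sdiff_subset_sdiff (hJ _ (hf a)) Subset.rfl
    have hgr := hgreedy i T hTsub hTunion
    have hcard : ((univ : Finset (Fin X)).card : ℝ) = (X : ℝ) := by simp
    have hXnn : (0:ℝ) ≤ (X : ℝ) := Nat.cast_nonneg _
    calc (x i : ℝ) * (OPTJ - ∑ j ∈ univ.filter (fun j => j < i), ∑ t ∈ S j, w t)
        ≤ (x i : ℝ) * ∑ a, ∑ t ∈ g a, w t :=
          mul_le_mul_of_nonneg_left lower (Nat.cast_nonneg _)
      _ ≤ (X : ℝ) * ∑ a ∈ B, ∑ t ∈ g a, w t := by rw [← hcard]; exact hBsum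
      _ = (X : ℝ) * ∑ t ∈ T, w t := by rw [hTsum]
      _ ≤ (X : ℝ) * (α * ∑ t ∈ S i, w t) := mul_le_mul_of_nonneg_left hgr hXnn
      _ = γ * ∑ t ∈ S i, w t := by rw [hγ]; ring
  -- main induction
  have main : ∀ m : ℕ, m ≤ n →
      OPTJ - ∑ j ∈ univ.filter (fun j : Fin n => j.val < m), ∑ t ∈ S j, w t
        ≤ ((γ - 1) / γ) ^ (∑ j ∈ univ.filter (fun j : Fin n => j.val < m), x j) * OPTJ := by
    intro m
    induction m with
    | zero => intro _; simp
    | succ k ih =>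
      intro hk
      have hkn : k < n := hk
      have IH := ih (le_of_lt hkn)
      set i : Fin n := ⟨k, hkn⟩ with hi
      have hfilter : univ.filter (fun j : Fin n => j.val < k + 1)
          = insert i (univ.filter (fun j : Fin n => j.val < k)) := by
        ext j
        simp only [mem_filter, mem_univ, true_and, mem_insert, hi, Fin.ext_iff]
        omega
      have hinot : i ∉ univ.filter (fun j : Fin n => j.val < k) := by simp [hi]
      have hX1 : 1 ≤ X :=
        le_trans (hx i) (Finset.single_le_sum (f := x) (fun k _ => Nat.zero_le _) (mem_univ i))
      have hγ1 : (1:ℝ) ≤ γ := by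
        rw [hγ]
        have h1 : (1:ℝ) ≤ (X:ℝ) := by exact_mod_cast hX1
        nlinarith
      have hγ0 : (0:ℝ) < γ := lt_of_lt_of_le one_pos hγ1
      have hc0 : 0 ≤ (γ - 1) / γ := div_nonneg (by linarith) (le_of_lt hγ0)
      have hfilt_eq : univ.filter (fun j : Fin n => j < i)
          = univ.filter (fun j : Fin n => j.val < k) := by
        ext j
        simp [Fin.lt_def, hi]
      have hkey := key i
      rw [hfilt_eq] at hkey
      rw [hfilter, Finset.sum_insert hinot, Finset.sum_insert hinot]
      set P := ∑ j ∈ univ.filter (fun j : Fin n => j.val < k), ∑ t ∈ S j, w t with hP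
      set M := ∑ j ∈ univ.filter (fun j : Fin n => j.val < k), x j with hM
      set c := (γ - 1) / γ with hc
      rcases le_or_gt (OPTJ - P) 0 with hD | hD
      · have : 0 ≤ c ^ (x i + M) * OPTJ :=
          mul_nonneg (pow_nonneg hc0 _) hOPT0
        have := hwS i
        linarith
      · -- Bernoulli
        have hb : 1 - (x i : ℝ) / γ ≤ c ^ (x i) := by
          have h2 : (-2 : ℝ) ≤ -1 / γ := by
            rw [neg_div]
            have : 1 / γ ≤ 1 := by
              rw [div_le_one hγ0]; exact hγ1
            linarith
          have hber := one_add_mul_le_pow h2 (x i)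
          have hceq : (1 : ℝ) + -1 / γ = c := by
            rw [hc]
            field_simp
            ring
          rw [hceq] at hber
          calc 1 - (x i : ℝ) / γ = 1 + (x i : ℝ) * (-1 / γ) := by ring
            _ ≤ c ^ (x i) := hber
        have hwSi : (x i : ℝ) / γ * (OPTJ - P) ≤ ∑ t ∈ S i, w t := by
          rw [div_mul_eq_mul_div, div_le_iff₀ hγ0]
          linarith [hkey]
        have step1 : OPTJ - (∑ t ∈ S i, w t + P) ≤ (OPTJ - P) * (1 - (x i : ℝ) / γ) := by
          have : (OPTJ - P) * (1 - (x i : ℝ) / γ) = (OPTJ - P) - (x i : ℝ) / γ * (OPTJ - P) := by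
            ring
          linarith
        have step2 : (OPTJ - P) * (1 - (x i : ℝ) / γ) ≤ (OPTJ - P) * c ^ (x i) :=
          mul_le_mul_of_nonneg_left hb (le_of_lt hD)
        have step3 : (OPTJ - P) * c ^ (x i) ≤ (c ^ M * OPTJ) * c ^ (x i) :=
          mul_le_mul_of_nonneg_right IH (pow_nonneg hc0 _)
        have step4 : (c ^ M * OPTJ) * c ^ (x i) = c ^ (x i + M) * OPTJ := by
          rw [pow_add]; ring
        linarith
  -- conclude
  have conv : ∀ (M : ℕ) (P : ℝ), (0 < γ) →
      OPTJ - P ≤ ((γ - 1) / γ) ^ M * OPTJ →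
      (γ ^ M - (γ - 1) ^ M) / γ ^ M * OPTJ ≤ P := by
    intro M P hγ0 h
    have hpne : γ ^ M ≠ 0 := pow_ne_zero _ (ne_of_gt hγ0)
    have h1 : ((γ - 1) / γ) ^ M = (γ - 1) ^ M / γ ^ M := div_pow _ _ _
    have h2 : (γ ^ M - (γ - 1) ^ M) / γ ^ M = 1 - (γ - 1) ^ M / γ ^ M := by
      rw [sub_div, div_self hpne]
    rw [h2, sub_mul, one_mul]
    rw [h1] at h
    linarith
  constructor
  · intro i
    have hX1 : 1 ≤ X :=
      le_trans (hx i) (Finset.single_le_sum (f := x) (fun k _ => Nat.zero_le _) (mem_univ i))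
    have hγ1 : (1:ℝ) ≤ γ := by
      rw [hγ]
      have h1 : (1:ℝ) ≤ (X:ℝ) := by exact_mod_cast hX1
      nlinarith
    have hγ0 : (0:ℝ) < γ := lt_of_lt_of_le one_pos hγ1
    have hfe : univ.filter (fun j : Fin n => j ≤ i)
        = univ.filter (fun j : Fin n => j.val < i.val + 1) := by
      ext j
      simp only [mem_filter, mem_univ, true_and, Fin.le_def]
      omega
    have hm := main (i.val + 1) i.isLt
    rw [hfe]
    exact conv _ _ hγ0 hm
  · rcases Nat.eq_zero_or_pos n with hn | hn
    · subst hn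
      have : X = 0 := by simp [hX]
      rw [hX] at *
      simp [this]
    · have i0 : Fin n := ⟨0, hn⟩
      have hX1 : 1 ≤ X :=
        le_trans (hx i0) (Finset.single_le_sum (f := x) (fun k _ => Nat.zero_le _) (mem_univ i0))
      have hγ1 : (1:ℝ) ≤ γ := by
        rw [hγ]
        have h1 : (1:ℝ) ≤ (X:ℝ) := by exact_mod_cast hX1
        nlinarith
      have hγ0 : (0:ℝ) < γ := lt_of_lt_of_le one_pos hγ1
      have hfe : univ.filter (fun j : Fin n => j.val < n) = (univ : Finset (Fin n)) := by
        ext j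
        simp [j.isLt]
      have hm := main n le_rfl
      rw [hfe] at hm
      exact conv _ _ hγ0 hm
end

section
/- Consider a symmetric set packing game with multiplicities x_1,…,x_n ≥ 1 and a real α ≥ 1. Let S = (S_1,…,S_n) be a feasible profile such that for every player i and every T ⊆ J \ (S_1 ∪ … ∪ S_{i−1}) that is a union of x_i pairwise disjoint members of 𝒮, α·w(S_i) ≥ w(T). Then OPT(J) ≤ (e^{1/α}/(e^{1/α}−1))·w(S). That is, the sequential price of anarchy of symmetric set packing games under α-approximate subgame perfect equilibria is at most e^{1/α}/(e^{1/α}−1). -/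
/-- Among `X` real values one can pick `m ≤ X` of them whose sum is at least
an `m/X` fraction of the total. -/
lemma topm_select {X m : ℕ} (hm1 : 1 ≤ m) (hm : m ≤ X) (v : Fin X → ℝ) :
    ∃ A : Finset (Fin X), A.card = m ∧
      (m : ℝ) * ∑ a, v a ≤ (X : ℝ) * ∑ a ∈ A, v a := by
  have hne : (Finset.univ.powersetCard m : Finset (Finset (Fin X))).Nonempty := by
    obtain ⟨t, ht, htc⟩ := Finset.exists_subset_card_eq (s := (Finset.univ : Finset (Fin X))) (n := m)
      (by simpa using hm)
    exact ⟨t, Finset.mem_powersetCard.2 ⟨ht, htc⟩⟩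
  obtain ⟨A, hA, hmax⟩ := Finset.exists_max_image _ (fun B => ∑ a ∈ B, v a) hne
  obtain ⟨hAsub, hAcard⟩ := Finset.mem_powersetCard.1 hA
  have hAne : A.Nonempty := Finset.card_pos.1 (by omega)
  obtain ⟨a0, ha0A, ha0min⟩ := Finset.exists_min_image A v hAne
  have hswap : ∀ b ∉ A, v b ≤ v a0 := by
    intro b hb
    have hbe : b ∉ A.erase a0 := fun h => hb (Finset.mem_of_mem_erase h)
    have hBcard : (insert b (A.erase a0)).card = m := by
      rw [Finset.card_insert_of_notMem hbe, Finset.card_erase_of_mem ha0A, hAcard]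
      omega
    have hBmem : insert b (A.erase a0) ∈ Finset.univ.powersetCard m :=
      Finset.mem_powersetCard.2 ⟨Finset.subset_univ _, hBcard⟩
    have := hmax _ hBmem
    rw [Finset.sum_insert hbe, Finset.sum_erase_eq_sub ha0A] at this
    linarith
  have hcompl : ∑ a ∈ Aᶜ, v a ≤ ((X - m : ℕ) : ℝ) * v a0 := by
    have := Finset.sum_le_card_nsmul Aᶜ v (v a0)
      (fun b hb => hswap b (Finset.mem_compl.1 hb))
    have hc : Aᶜ.card = X - m := by
      rw [Finset.card_compl, hAcard]; simp
    rw [hc] at this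
    simpa [nsmul_eq_mul] using this
  have hmin : (m : ℝ) * v a0 ≤ ∑ a ∈ A, v a := by
    have := Finset.card_nsmul_le_sum A v (v a0) (fun b hb => ha0min b hb)
    rw [hAcard] at this
    simpa [nsmul_eq_mul] using this
  have hsplit : ∑ a ∈ A, v a + ∑ a ∈ Aᶜ, v a = ∑ a, v a :=
    Finset.sum_add_sum_compl A v
  refine ⟨A, hAcard, ?_⟩
  have hXm : ((X - m : ℕ) : ℝ) = (X : ℝ) - m := by
    push_cast [Nat.cast_sub hm]; ring
  rw [hXm] at hcompl
  have hm1' : (1 : ℝ) ≤ m := by exact_mod_cast hm1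
  have hmX : (m : ℝ) ≤ X := by exact_mod_cast hm
  nlinarith [mul_le_mul_of_nonneg_left hcompl (by linarith : (0:ℝ) ≤ (m:ℝ)),
    mul_le_mul_of_nonneg_left hmin (by linarith : (0:ℝ) ≤ (X:ℝ) - m)]

/-- In a symmetric set packing game with multiplicities
`x_1,…,x_n ≥ 1` and a real `α ≥ 1`: if the feasible profile `S = (S_1,…,S_n)`
satisfies the sequential `α`-greedy condition (for every player `i` and every
`T ⊆ J \ (S_1 ∪ … ∪ S_{i−1})` that is a union of `x_i` pairwise disjoint members of
`𝒮`, `α·w(S_i) ≥ w(T)`), then `OPT(J) ≤ (e^{1/α}/(e^{1/α}−1))·w(S)`; that is, the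
sequential price of anarchy of symmetric set packing games under `α`-approximate
subgame perfect equilibria is at most `e^{1/α}/(e^{1/α}−1)`. -/
theorem symmetric_set_packing_seq_poa_upper_bound
    {ι : Type} [DecidableEq ι] (J : Finset ι) (w : ι → ℝ)
    (hw : ∀ j ∈ J, 0 ≤ w j) (n : ℕ) (hn : 1 ≤ n)
    (𝒮 : Set (Finset ι))
    (hJ : ∀ A ∈ 𝒮, A ⊆ J)
    (hdc : ∀ A ∈ 𝒮, ∀ T, T ⊆ A → T ∈ 𝒮)
    (hempty : ∅ ∈ 𝒮)
    (x : Fin n → ℕ) (hx : ∀ i, 1 ≤ x i)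
    (α : ℝ) (hα : 1 ≤ α)
    (S : Fin n → Finset ι)
    (hS : ∀ i, IsUnionOf 𝒮 (x i) (S i))
    (hSdisj : ∀ i k, i ≠ k → Disjoint (S i) (S k))
    (OPTJ : ℝ)
    (hOPT : IsGreatest
      {v : ℝ | ∃ T, T ⊆ J ∧ IsUnionOf 𝒮 (∑ k, x k) T ∧ v = ∑ j ∈ T, w j} OPTJ)
    (hgreedy : ∀ i, ∀ T, T ⊆ J \ ((Finset.univ.filter (fun j => j < i)).biUnion S) →
      IsUnionOf 𝒮 (x i) T → ∑ j ∈ T, w j ≤ α * ∑ j ∈ S i, w j) :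
    OPTJ ≤ (Real.exp (1 / α) / (Real.exp (1 / α) - 1)) * ∑ i, ∑ t ∈ S i, w t := by
  have hα0 : (0:ℝ) < α := lt_of_lt_of_le one_pos hα
  set X : ℕ := ∑ k, x k with hXdef
  have hXpos : 0 < X := by
    have : (1:ℕ) ≤ ∑ k, x k := le_trans hn (by
      calc n = ∑ _k : Fin n, 1 := by simp
        _ ≤ ∑ k, x k := Finset.sum_le_sum (fun k _ => hx k))
    omega
  have hSJ : ∀ i, S i ⊆ J := by
    intro i
    obtain ⟨f, hf1, _, hf3⟩ := hS i
    rw [hf3]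
    exact Finset.biUnion_subset.2 (fun a _ => hJ _ (hf1 a))
  set Wi : Fin n → ℝ := fun i => ∑ j ∈ S i, w j with hWi
  have hWi0 : ∀ i, 0 ≤ Wi i := fun i =>
    Finset.sum_nonneg (fun j hj => hw j (hSJ i hj))
  obtain ⟨⟨Tstar, hTJ, ⟨f, hf𝒮, hfdisj, hfU⟩, hOPTeq⟩, hub⟩ := hOPT
  have hOPT0 : 0 ≤ OPTJ := by
    refine hub ⟨∅, Finset.empty_subset _, ⟨fun _ => ∅, fun _ => hempty,
      fun _ _ _ => disjoint_bot_left, by ext j; simp⟩, by simp⟩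
  set U : Fin n → Finset ι := fun i => (Finset.univ.filter (fun j => j < i)).biUnion S
    with hU
  set P : Fin n → ℝ := fun i => ∑ k ∈ Finset.univ.filter (fun k => k < i), Wi k with hP
  -- key inequality per player
  have key : ∀ i, (x i : ℝ) * (OPTJ - P i) ≤ (X : ℝ) * (α * Wi i) := by
    intro i
    set g : Fin X → Finset ι := fun a => f a \ U i with hg
    have hg𝒮 : ∀ a, g a ∈ 𝒮 := fun a => hdc _ (hf𝒮 a) _ (Finset.sdiff_subset)
    have hgdisj : ∀ a b, a ≠ b → Disjoint (g a) (g b) := fun a b hab =>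
      ((hfdisj a b hab).mono Finset.sdiff_subset Finset.sdiff_subset)
    have hgU : Finset.univ.biUnion g = Tstar \ U i := by
      rw [hfU]
      ext j
      simp only [Finset.mem_biUnion, Finset.mem_sdiff, Finset.mem_univ, true_and, hg]
      tauto
    set v : Fin X → ℝ := fun a => ∑ j ∈ g a, w j with hv
    have hsumv : ∑ a, v a = ∑ j ∈ Tstar \ U i, w j := by
      rw [← hgU]
      exact (Finset.sum_biUnion (fun a _ b _ hab => hgdisj a b hab)).symm
    have hUP : ∑ j ∈ U i, w j = P i := by
      rw [hU, hP]
      exact Finset.sum_biUnion (fun a _ b _ hab => hSdisj a b hab)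
    have hUJ : U i ⊆ J := Finset.biUnion_subset.2 (fun k _ => hSJ k)
    have hrem : OPTJ - P i ≤ ∑ j ∈ Tstar \ U i, w j := by
      have h1 : ∑ j ∈ Tstar ∩ U i, w j + ∑ j ∈ Tstar \ U i, w j = ∑ j ∈ Tstar, w j :=
        Finset.sum_inter_add_sum_sdiff Tstar (U i) w
      have h2 : ∑ j ∈ Tstar ∩ U i, w j ≤ ∑ j ∈ U i, w j :=
        Finset.sum_le_sum_of_subset_of_nonneg (Finset.inter_subset_right)
          (fun j hj _ => hw j (hUJ hj))
      rw [hOPTeq]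
      rw [hUP] at h2
      linarith
    have hxX : x i ≤ X := Finset.single_le_sum (fun k _ => Nat.zero_le (x k))
      (Finset.mem_univ i)
    obtain ⟨A, hAcard, hAineq⟩ := topm_select (hx i) hxX v
    set T : Finset ι := A.biUnion g with hT
    have hTsub : T ⊆ J \ U i := by
      intro j hj
      obtain ⟨a, _, hja⟩ := Finset.mem_biUnion.1 hj
      rw [Finset.mem_sdiff]
      have := Finset.mem_sdiff.1 hja
      exact ⟨hJ _ (hf𝒮 a) this.1, this.2⟩
    have hTu : IsUnionOf 𝒮 (x i) T := by
      refine ⟨fun k => g ((A.equivFin.symm (Fin.cast hAcard.symm k)).val),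
        fun k => hg𝒮 _, ?_, ?_⟩
      · intro a b hab
        apply hgdisj
        intro hval
        apply hab
        have h1 : A.equivFin.symm (Fin.cast hAcard.symm a)
            = A.equivFin.symm (Fin.cast hAcard.symm b) := Subtype.ext hval
        have h2 := A.equivFin.symm.injective h1
        have h3 := congrArg Fin.val h2
        simp only [Fin.coe_cast] at h3
        exact Fin.ext h3
      · ext j
        simp only [Finset.mem_biUnion, Finset.mem_univ, true_and, hT]
        constructor
        · rintro ⟨a, ha, hj⟩
          refine ⟨Fin.cast hAcard (A.equivFin ⟨a, ha⟩), ?_⟩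
          have h3 : (A.equivFin.symm
              (Fin.cast hAcard.symm (Fin.cast hAcard (A.equivFin ⟨a, ha⟩)))) = ⟨a, ha⟩ := by
            simp
          rw [h3]
          exact hj
        · rintro ⟨k, hj⟩
          exact ⟨_, (A.equivFin.symm (Fin.cast hAcard.symm k)).2, hj⟩
    have hgr := hgreedy i T hTsub hTu
    have hTsum : ∑ j ∈ T, w j = ∑ a ∈ A, v a :=
      Finset.sum_biUnion (fun a _ b _ hab => hgdisj a b hab)
    have hXa : (0:ℝ) ≤ (X:ℝ) := by positivity
    calc (x i : ℝ) * (OPTJ - P i) ≤ (x i : ℝ) * ∑ a, v a := by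
          apply mul_le_mul_of_nonneg_left _ (by positivity)
          rw [hsumv]; exact hrem
      _ ≤ (X : ℝ) * ∑ a ∈ A, v a := hAineq
      _ = (X : ℝ) * ∑ j ∈ T, w j := by rw [hTsum]
      _ ≤ (X : ℝ) * (α * Wi i) := mul_le_mul_of_nonneg_left hgr hXa
  -- rescaled per-player inequality
  set c : Fin n → ℝ := fun i => (x i : ℝ) / (α * X) with hc
  have hαX : (0:ℝ) < α * X := by positivity
  have hci : ∀ i, c i * (OPTJ - P i) ≤ Wi i := by
    intro i
    rw [hc]
    rw [div_mul_eq_mul_div, div_le_iff₀ hαX]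
    nlinarith [key i]
  have hc0 : ∀ i, 0 ≤ c i := fun i => by positivity
  have hc1 : ∀ i, c i ≤ 1 := by
    intro i
    rw [hc, div_le_one hαX]
    have hxX : (x i : ℝ) ≤ X := by
      exact_mod_cast Finset.single_le_sum (fun k _ => Nat.zero_le (x k)) (Finset.mem_univ i)
    nlinarith [(Nat.cast_pos (α := ℝ)).2 hXpos]
  -- the filter sets indexed by natural numbers
  set F : ℕ → Finset (Fin n) := fun m => Finset.univ.filter (fun k => (k:ℕ) < m) with hF
  have hPF : ∀ i : Fin n, P i = ∑ k ∈ F (i:ℕ), Wi k := by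
    intro i
    rw [hP, hF]
    congr 1
  -- the induction
  have claim : ∀ m, m ≤ n →
      OPTJ - ∑ k ∈ F m, Wi k ≤ OPTJ * ∏ k ∈ F m, (1 - c k) := by
    intro m
    induction m with
    | zero => intro _; simp [hF]
    | succ m ih =>
      intro hm1
      have hmn : m < n := hm1
      set i : Fin n := ⟨m, hmn⟩ with hi
      have hiF : i ∉ F m := by simp [hF, hi]
      have hFins : F (m+1) = insert i (F m) := by
        ext k
        simp only [hF, Finset.mem_filter, Finset.mem_univ, true_and, Finset.mem_insert,
          hi, Fin.ext_iff]
        omega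
      rw [hFins, Finset.sum_insert hiF, Finset.prod_insert hiF]
      have IH := ih (le_of_lt hmn)
      have h1 := hci i
      rw [hPF i] at h1
      have h2 : (1 - c i) * (OPTJ * ∏ k ∈ F m, (1 - c k)) ≥
          (1 - c i) * (OPTJ - ∑ k ∈ F m, Wi k) :=
        mul_le_mul_of_nonneg_left IH (by linarith [hc1 i])
      have hival : (i : ℕ) = m := rfl
      rw [hival] at h1
      nlinarith [h2, h1]
  have hFn : F n = Finset.univ := by
    ext k; simp [hF, k.isLt]
  have hfin : OPTJ - ∑ k, Wi k ≤ OPTJ * Real.exp (-(1/α)) := by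
    have h := claim n le_rfl
    rw [hFn] at h
    have hprod : ∏ k, (1 - c k) ≤ Real.exp (-(1/α)) := by
      have h1 : ∏ k, (1 - c k) ≤ ∏ k, Real.exp (-(c k)) :=
        Finset.prod_le_prod (fun k _ => by linarith [hc1 k]) (fun k _ => by
          have := Real.add_one_le_exp (-(c k)); linarith)
      rw [← Real.exp_sum] at h1
      have hsc : ∑ k, c k = 1/α := by
        rw [hc]
        rw [← Finset.sum_div]
        have hcast : ∑ k, ((x k : ℝ)) = (X : ℝ) := by
          rw [hXdef]; push_cast; ring
        rw [hcast]
        have hXne : (X:ℝ) ≠ 0 := by positivity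
        field_simp
      rw [Finset.sum_neg_distrib, hsc] at h1
      exact h1
    calc OPTJ - ∑ k, Wi k ≤ OPTJ * ∏ k, (1 - c k) := h
      _ ≤ OPTJ * Real.exp (-(1/α)) := mul_le_mul_of_nonneg_left hprod hOPT0
  -- final algebra
  set E : ℝ := Real.exp (1/α) with hE
  have hE1 : 1 < E := by
    rw [hE]
    have : (0:ℝ) < 1/α := by positivity
    calc (1:ℝ) = Real.exp 0 := by simp
      _ < Real.exp (1/α) := Real.exp_lt_exp.2 this
  have hEexp : Real.exp (-(1/α)) = E⁻¹ := by rw [hE, ← Real.exp_neg]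
  rw [hEexp] at hfin
  have hE0 : (0:ℝ) < E := lt_trans one_pos hE1
  have hcancel : OPTJ * E⁻¹ * E = OPTJ := by field_simp
  have hW : ∑ i, ∑ t ∈ S i, w t = ∑ k, Wi k := rfl
  rw [hW, div_mul_eq_mul_div, le_div_iff₀ (by linarith : (0:ℝ) < E - 1)]
  nlinarith [mul_le_mul_of_nonneg_right hfin (le_of_lt hE0), hcancel]
end

section
/- For every real α ≥ 1, it holds that α + 1/2 ≤ e^{1/α}/(e^{1/α}−1) ≤ α + 1/(e−1). -/
open Real Set

private lemma one_lt_exp_of_pos' {x : ℝ} (hx : 0 < x) : 1 < Real.exp x := by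
  nlinarith [Real.add_one_lt_exp hx.ne']

private lemma sinh_le_mul_cosh {t : ℝ} (ht : 0 ≤ t) : Real.sinh t ≤ t * Real.cosh t := by
  have hderiv : ∀ s : ℝ, HasDerivAt (fun s : ℝ => s * Real.cosh s - Real.sinh s)
      (1 * Real.cosh s + s * Real.sinh s - Real.cosh s) s := fun s =>
    ((hasDerivAt_id s).mul (Real.hasDerivAt_cosh s)).sub (Real.hasDerivAt_sinh s)
  have key : MonotoneOn (fun s : ℝ => s * Real.cosh s - Real.sinh s) (Ici 0) := by
    apply monotoneOn_of_deriv_nonneg (convex_Ici 0)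
    · exact ((continuous_id.mul Real.continuous_cosh).sub Real.continuous_sinh).continuousOn
    · exact fun s _ => (hderiv s).differentiableAt.differentiableWithinAt
    · intro s hs
      rw [interior_Ici] at hs
      replace hs : 0 < s := hs
      rw [(hderiv s).deriv]
      have h1 : 0 ≤ Real.sinh s := Real.sinh_nonneg_iff.mpr hs.le
      nlinarith [mul_nonneg hs.le h1]
  have h0 : (0:ℝ) ∈ Ici (0:ℝ) := self_mem_Ici
  have := key h0 (mem_Ici.mpr ht) ht
  simp only [Real.sinh_zero, Real.cosh_zero, mul_one, zero_mul, sub_zero, sub_self] at this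
  linarith

private lemma g_mono : MonotoneOn
    (fun x : ℝ => Real.exp x / (Real.exp x - 1) - x⁻¹) (Ioi 0) := by
  have hderiv : ∀ x : ℝ, 0 < x → HasDerivAt
      (fun x : ℝ => Real.exp x / (Real.exp x - 1) - x⁻¹)
      ((Real.exp x * (Real.exp x - 1) - Real.exp x * Real.exp x) / (Real.exp x - 1) ^ 2
        - (-(x ^ 2)⁻¹)) x := by
    intro x hx
    have hE : 1 < Real.exp x := one_lt_exp_of_pos' hx
    exact ((Real.hasDerivAt_exp x).div ((Real.hasDerivAt_exp x).sub_const 1)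
      (by linarith)).sub (hasDerivAt_inv hx.ne')
  apply monotoneOn_of_deriv_nonneg (convex_Ioi 0)
  · intro x hx
    exact (hderiv x hx).differentiableAt.continuousAt.continuousWithinAt
  · intro x hx
    rw [interior_Ioi] at hx
    exact (hderiv x hx).differentiableAt.differentiableWithinAt
  · intro x hx
    rw [interior_Ioi] at hx
    replace hx : 0 < x := hx
    rw [(hderiv x hx).deriv]
    have hE : 1 < Real.exp x := one_lt_exp_of_pos' hx
    have hs : x / 2 ≤ Real.sinh (x / 2) := Real.self_le_sinh_iff.mpr (by linarith)
    rw [Real.sinh_eq] at hs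
    have hhalf : Real.exp (x/2) * Real.exp (x/2) = Real.exp x := by
      rw [← Real.exp_add]; ring_nf
    have hinv : Real.exp (x/2) * Real.exp (-(x/2)) = 1 := by
      rw [← Real.exp_add]; simp
    have hEp : 0 < Real.exp (x/2) := Real.exp_pos _
    have hkey : x * Real.exp (x/2) ≤ Real.exp x - 1 := by
      nlinarith [mul_le_mul_of_nonneg_right
        (show x ≤ Real.exp (x/2) - Real.exp (-(x/2)) by linarith) hEp.le]
    have hA : 0 ≤ Real.exp x - 1 - x * Real.exp (x/2) := by linarith
    have hB : 0 ≤ Real.exp x - 1 + x * Real.exp (x/2) := by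
      nlinarith [mul_pos hx hEp]
    have hhalf2 : x ^ 2 * (Real.exp (x/2) * Real.exp (x/2)) = x ^ 2 * Real.exp x := by
      rw [hhalf]
    have hsq : x ^ 2 * Real.exp x ≤ (Real.exp x - 1) ^ 2 := by
      nlinarith [mul_nonneg hA hB]
    have hx2 : (0:ℝ) < x ^ 2 := by positivity
    have hE2 : (0:ℝ) < (Real.exp x - 1) ^ 2 := by nlinarith
    have hdivle : Real.exp x / (Real.exp x - 1) ^ 2 ≤ (x ^ 2)⁻¹ := by
      rw [div_le_iff₀ hE2]
      calc Real.exp x = (x ^ 2)⁻¹ * (x ^ 2 * Real.exp x) := by field_simp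
        _ ≤ (x ^ 2)⁻¹ * (Real.exp x - 1) ^ 2 :=
            mul_le_mul_of_nonneg_left hsq (by positivity)
    have heq : (Real.exp x * (Real.exp x - 1) - Real.exp x * Real.exp x) / (Real.exp x - 1) ^ 2
        = -(Real.exp x / (Real.exp x - 1) ^ 2) := by ring
    rw [heq]
    linarith

/-- For every real `α ≥ 1`,
`α + 1/2 ≤ e^{1/α}/(e^{1/α}−1) ≤ α + 1/(e−1)`. -/
theorem exp_ratio_bounds (α : ℝ) (hα : 1 ≤ α) :
    α + 1 / 2 ≤ Real.exp (1 / α) / (Real.exp (1 / α) - 1) ∧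
    Real.exp (1 / α) / (Real.exp (1 / α) - 1) ≤ α + 1 / (Real.exp 1 - 1) := by
  have hα0 : (0:ℝ) < α := by linarith
  have hx : (0:ℝ) < 1 / α := by positivity
  have hE : 1 < Real.exp (1 / α) := one_lt_exp_of_pos' hx
  set E := Real.exp (1 / α) with hEdef
  constructor
  · -- lower bound, from sinh t ≤ t cosh t at t = 1/(2α)
    have t0 : (0:ℝ) ≤ 1 / (2 * α) := by positivity
    have h := sinh_le_mul_cosh t0
    rw [Real.sinh_eq, Real.cosh_eq] at h
    have hEp : 0 < Real.exp (1 / (2 * α)) := Real.exp_pos _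
    have hhalf : Real.exp (1 / (2 * α)) * Real.exp (1 / (2 * α)) = E := by
      rw [hEdef, ← Real.exp_add]
      congr 1
      field_simp
      norm_num
    have hinv : Real.exp (1 / (2 * α)) * Real.exp (-(1 / (2 * α))) = 1 := by
      rw [← Real.exp_add]; simp
    -- clear the 1/(2α) factor
    have h2 : 2 * α * ((Real.exp (1 / (2 * α)) - Real.exp (-(1 / (2 * α)))) / 2)
        ≤ (Real.exp (1 / (2 * α)) + Real.exp (-(1 / (2 * α)))) / 2 := by
      have := mul_le_mul_of_nonneg_left h (by positivity : (0:ℝ) ≤ 2 * α)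
      calc 2 * α * ((Real.exp (1 / (2 * α)) - Real.exp (-(1 / (2 * α)))) / 2)
          ≤ 2 * α * (1 / (2 * α) * ((Real.exp (1 / (2 * α)) + Real.exp (-(1 / (2 * α)))) / 2)) :=
            this
        _ = (Real.exp (1 / (2 * α)) + Real.exp (-(1 / (2 * α)))) / 2 := by
            field_simp
    have hkey : 2 * α * (E - 1) ≤ E + 1 := by
      nlinarith [mul_le_mul_of_nonneg_right h2 hEp.le]
    rw [le_div_iff₀ (by linarith : (0:ℝ) < E - 1)]
    nlinarith
  · -- upper bound, from monotonicity of g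
    have h1 : (1:ℝ) ∈ Ioi (0:ℝ) := by norm_num
    have hxm : 1 / α ∈ Ioi (0:ℝ) := hx
    have hle : 1 / α ≤ 1 := by
      rw [div_le_one hα0]; exact hα
    have h := g_mono hxm h1 hle
    dsimp only at h
    rw [inv_one] at h
    have hinv : (1 / α)⁻¹ = α := by field_simp
    rw [hinv] at h
    have hE1 : 1 < Real.exp 1 := one_lt_exp_of_pos' one_pos
    have hne : Real.exp 1 - 1 ≠ 0 := by linarith
    have heq : Real.exp 1 / (Real.exp 1 - 1) - 1 = 1 / (Real.exp 1 - 1) := by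
      field_simp
      ring
    linarith
end

section
/- For every set packing game with n ≥ 2 players, every real α ≥ 1, every integer k with 1 ≤ k ≤ n, every α-approximate k-collusion Nash equilibrium S = (S_1,…,S_n), and every feasible profile O = (O_1,…,O_n), the total values satisfy w(O) ≤ (α + (n−k)/(n−1))·w(S). -/
open Finset

lemma aux_card_filter_mem {β : Type*} [DecidableEq β] (s : Finset β) (a : β) (ha : a ∈ s)
    (m : ℕ) :
    ((s.powersetCard (m + 1)).filter (fun K => a ∈ K)).card = (s.card - 1).choose m := by
  rw [show (s.card - 1).choose m = ((s.erase a).powersetCard m).card by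
    rw [card_powersetCard, card_erase_of_mem ha]]
  refine Finset.card_bij' (fun K _ => K.erase a) (fun K _ => insert a K) ?hi ?hj ?li ?ri
  case hi =>
    intro K hK
    simp only [Finset.mem_filter, Finset.mem_powersetCard] at hK
    obtain ⟨⟨hKs, hKc⟩, haK⟩ := hK
    rw [mem_powersetCard]
    exact ⟨erase_subset_erase a hKs, by rw [card_erase_of_mem haK, hKc]; rfl⟩
  case hj =>
    intro K hK
    rw [mem_powersetCard] at hK
    obtain ⟨hKs, hKc⟩ := hK
    have haK : a ∉ K := fun h => (mem_erase.mp (hKs h)).1 rfl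
    simp only [mem_filter, mem_powersetCard]
    refine ⟨⟨insert_subset ha (hKs.trans (erase_subset a s)), ?_⟩, mem_insert_self a K⟩
    rw [card_insert_of_notMem haK, hKc]
  case li =>
    intro K hK
    simp only [mem_filter] at hK
    exact insert_erase hK.2
  case ri =>
    intro K hK
    rw [mem_powersetCard] at hK
    have haK : a ∉ K := fun h => (mem_erase.mp (hK.1 h)).1 rfl
    exact erase_insert haK



/-- For every set packing game with `n ≥ 2` players, every real
`α ≥ 1`, every integer `k` with `1 ≤ k ≤ n`, every `α`-approximate `k`-collusion Nash
equilibrium `S` and every feasible profile `O`, the total values satisfy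
`w(O) ≤ (α + (n−k)/(n−1))·w(S)`. -/
theorem set_packing_collusion_poa_upper_bound
    {ι : Type} [DecidableEq ι] (J : Finset ι) (w : ι → ℝ)
    (hw : ∀ j ∈ J, 0 ≤ w j) (n : ℕ) (hn : 2 ≤ n)
    (𝒮 : Fin n → Set (Finset ι))
    (hJ : ∀ i, ∀ A ∈ 𝒮 i, A ⊆ J)
    (hdc : ∀ i, ∀ A ∈ 𝒮 i, ∀ T, T ⊆ A → T ∈ 𝒮 i)
    (hempty : ∀ i, ∅ ∈ 𝒮 i)
    (α : ℝ) (hα : 1 ≤ α)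
    (k : ℕ) (hk1 : 1 ≤ k) (hkn : k ≤ n)
    (S O : Fin n → Finset ι)
    (hS : ∀ i, S i ∈ 𝒮 i)
    (hSdisj : ∀ i j, i ≠ j → Disjoint (S i) (S j))
    (hO : ∀ i, O i ∈ 𝒮 i)
    (hOdisj : ∀ i j, i ≠ j → Disjoint (O i) (O j))
    -- S is an α-approximate k-collusion Nash equilibrium
    (hColl : ∀ K : Finset (Fin n), K.card ≤ k →
      ∀ T : Fin n → Finset ι,
        (∀ i ∈ K, T i ∈ 𝒮 i) →
        (∀ i ∈ K, ∀ j ∈ K, i ≠ j → Disjoint (T i) (T j)) →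
        (∀ i ∈ K, ∀ j, j ∉ K → Disjoint (T i) (S j)) →
        ∑ i ∈ K, ∑ t ∈ T i, w t ≤ α * ∑ i ∈ K, ∑ t ∈ S i, w t) :
    ∑ i, ∑ j ∈ O i, w j
      ≤ (α + ((n : ℝ) - k) / ((n : ℝ) - 1)) * ∑ i, ∑ j ∈ S i, w j := by
  classical
  set 𝒦 := Finset.powersetCard k (Finset.univ : Finset (Fin n)) with h𝒦
  set g : Fin n → Fin n → ℝ := fun i j => ∑ t ∈ O i ∩ S j, w t with hg
  have hk' : k - 1 + 1 = k := by omega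
  -- counting lemma 1
  have count1 : ∀ i : Fin n, (𝒦.filter (fun K => i ∈ K)).card = (n - 1).choose (k - 1) := by
    intro i
    have h := aux_card_filter_mem (Finset.univ : Finset (Fin n)) i (Finset.mem_univ i) (k - 1)
    rw [hk'] at h
    simpa [Finset.card_univ] using h
  -- counting lemma 2
  have count2 : ∀ i j : Fin n, i ≠ j →
      (𝒦.filter (fun K => i ∈ K ∧ j ∉ K)).card = (n - 2).choose (k - 1) := by
    intro i j hij
    have hset : 𝒦.filter (fun K => i ∈ K ∧ j ∉ K)
        = (((Finset.univ : Finset (Fin n)).erase j).powersetCard k).filter (fun K => i ∈ K) := by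
      ext L
      simp only [h𝒦, Finset.mem_filter, Finset.mem_powersetCard, Finset.subset_erase]
      tauto
    have h := aux_card_filter_mem ((Finset.univ : Finset (Fin n)).erase j) i
      (Finset.mem_erase.mpr ⟨hij, Finset.mem_univ i⟩) (k - 1)
    rw [hk'] at h
    rw [hset, h, Finset.card_erase_of_mem (Finset.mem_univ j), Finset.card_univ,
      Fintype.card_fin]
    congr 1
  -- swap lemma 1
  have swap1 : ∀ f : Fin n → ℝ,
      ∑ K ∈ 𝒦, ∑ i ∈ K, f i = ((n - 1).choose (k - 1) : ℝ) * ∑ i, f i := by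
    intro f
    have h1 : ∀ K ∈ 𝒦, ∑ i ∈ K, f i = ∑ i : Fin n, if i ∈ K then f i else 0 := by
      intro K _
      rw [Finset.sum_ite_mem, Finset.univ_inter]
    rw [Finset.sum_congr rfl h1, Finset.sum_comm]
    have h2 : ∀ i : Fin n, (∑ K ∈ 𝒦, if i ∈ K then f i else 0)
        = ((n - 1).choose (k - 1) : ℝ) * f i := by
      intro i
      rw [← Finset.sum_filter, Finset.sum_const, count1 i, nsmul_eq_mul]
    rw [Finset.sum_congr rfl fun i _ => h2 i, ← Finset.mul_sum]
  -- swap lemma 2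
  have swap2 : ∑ K ∈ 𝒦, ∑ i ∈ K, ∑ j ∈ Finset.univ \ K, g i j
      = ((n - 2).choose (k - 1) : ℝ) * ∑ i, ∑ j ∈ Finset.univ.erase i, g i j := by
    have h1 : ∀ K ∈ 𝒦, ∑ i ∈ K, ∑ j ∈ Finset.univ \ K, g i j
        = ∑ i : Fin n, ∑ j : Fin n, if i ∈ K ∧ j ∉ K then g i j else 0 := by
      intro K _
      have hin : ∀ i : Fin n, ∑ j ∈ Finset.univ \ K, g i j
          = ∑ j : Fin n, if j ∉ K then g i j else 0 := by
        intro i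
        rw [← Finset.sum_filter]
        congr 1
        ext j; simp
      rw [show (∑ i ∈ K, ∑ j ∈ Finset.univ \ K, g i j)
          = ∑ i : Fin n, if i ∈ K then ∑ j ∈ Finset.univ \ K, g i j else 0 by
        rw [Finset.sum_ite_mem, Finset.univ_inter]]
      refine Finset.sum_congr rfl fun i _ => ?_
      by_cases h : i ∈ K
      · simp only [h, if_true, true_and, hin i]
      · simp [h]
    rw [Finset.sum_congr rfl h1, Finset.sum_comm]
    rw [Finset.sum_congr rfl fun i (_ : i ∈ Finset.univ) =>
      (Finset.sum_comm (s := 𝒦) (t := Finset.univ))]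
    have h3 : ∀ i j : Fin n, (∑ K ∈ 𝒦, if i ∈ K ∧ j ∉ K then g i j else 0)
        = if j = i then 0 else ((n - 2).choose (k - 1) : ℝ) * g i j := by
      intro i j
      rw [← Finset.sum_filter, Finset.sum_const, nsmul_eq_mul]
      by_cases h : j = i
      · subst h
        rw [show 𝒦.filter (fun K => j ∈ K ∧ j ∉ K) = ∅ from
          Finset.filter_false_of_mem fun K _ => by tauto]
        simp
      · rw [count2 i j (fun he => h he.symm)]
        simp [h]
    rw [Finset.sum_congr rfl fun i _ => Finset.sum_congr rfl fun j _ => h3 i j]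
    rw [Finset.mul_sum]
    refine Finset.sum_congr rfl fun i _ => ?_
    rw [Finset.mul_sum]
    rw [show (∑ j : Fin n, if j = i then 0 else ((n - 2).choose (k - 1) : ℝ) * g i j)
        = ∑ j ∈ Finset.univ.erase i,
            if j = i then 0 else ((n - 2).choose (k - 1) : ℝ) * g i j from
      (Finset.sum_erase _ (by simp)).symm]
    exact Finset.sum_congr rfl fun j hj => by simp [(Finset.mem_erase.mp hj).1]
  -- step 3 : G ≤ W(S)
  have step3 : ∑ i, ∑ j ∈ Finset.univ.erase i, g i j ≤ ∑ j, ∑ t ∈ S j, w t := by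
    have hswap : ∑ i, ∑ j ∈ Finset.univ.erase i, g i j
        = ∑ j : Fin n, ∑ i ∈ Finset.univ.erase j, g i j := by
      have e1 : ∀ i : Fin n, ∑ j ∈ Finset.univ.erase i, g i j
          = ∑ j : Fin n, if j ≠ i then g i j else 0 := by
        intro i
        rw [← Finset.sum_filter]
        congr 1
        ext j; simp
      rw [Finset.sum_congr rfl fun i _ => e1 i, Finset.sum_comm]
      refine Finset.sum_congr rfl fun j _ => ?_
      rw [← Finset.sum_filter]
      congr 1
      ext i; simp [ne_comm]
    rw [hswap]
    refine Finset.sum_le_sum fun j _ => ?_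
    have hdisj : (↑(Finset.univ.erase j) : Set (Fin n)).PairwiseDisjoint
        (fun i => O i ∩ S j) := fun a _ b _ hab =>
      (hOdisj a b hab).mono Finset.inter_subset_left Finset.inter_subset_left
    calc ∑ i ∈ Finset.univ.erase j, g i j
        = ∑ t ∈ (Finset.univ.erase j).biUnion (fun i => O i ∩ S j), w t :=
          (Finset.sum_biUnion hdisj).symm
      _ ≤ ∑ t ∈ S j, w t := by
          apply Finset.sum_le_sum_of_subset_of_nonneg
          · exact Finset.biUnion_subset.mpr fun i _ => Finset.inter_subset_right
          · intro t ht _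
            exact hw t (hJ j (S j) (hS j) ht)
  -- step 1 : per-coalition bound
  have step1 : ∀ K ∈ 𝒦, ∑ i ∈ K, (∑ t ∈ O i, w t)
      ≤ α * ∑ i ∈ K, (∑ t ∈ S i, w t) + ∑ i ∈ K, ∑ j ∈ Finset.univ \ K, g i j := by
    intro K hK
    obtain ⟨-, hKcard⟩ := Finset.mem_powersetCard.mp hK
    set B := (Finset.univ \ K).biUnion S with hB
    have hT1 : ∀ i ∈ K, O i \ B ∈ 𝒮 i := fun i _ =>
      hdc i (O i) (hO i) _ Finset.sdiff_subset
    have hT2 : ∀ i ∈ K, ∀ j ∈ K, i ≠ j → Disjoint (O i \ B) (O j \ B) := fun i _ j _ hij =>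
      (hOdisj i j hij).mono Finset.sdiff_subset Finset.sdiff_subset
    have hT3 : ∀ i ∈ K, ∀ j, j ∉ K → Disjoint (O i \ B) (S j) := by
      intro i _ j hj
      exact Finset.sdiff_disjoint.mono_right
        (Finset.subset_biUnion_of_mem S (by simp [hj]))
    have hcoll := hColl K (le_of_eq hKcard) (fun i => O i \ B) hT1 hT2 hT3
    have hsplit : ∀ i ∈ K, (∑ t ∈ O i, w t)
        = (∑ t ∈ O i \ B, w t) + ∑ j ∈ Finset.univ \ K, g i j := by
      intro i _
      have h2 : O i ∩ B = (Finset.univ \ K).biUnion (fun j => O i ∩ S j) := by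
        ext t
        simp only [hB, Finset.mem_inter, Finset.mem_biUnion]
        tauto
      have hpd : (↑(Finset.univ \ K) : Set (Fin n)).PairwiseDisjoint
          (fun j => O i ∩ S j) := fun a _ b _ hab =>
        (hSdisj a b hab).mono Finset.inter_subset_right Finset.inter_subset_right
      have h3 := Finset.sum_biUnion (f := w) hpd
      have h1 := Finset.sum_inter_add_sum_sdiff (O i) B w
      rw [h2, h3] at h1
      linarith
    rw [Finset.sum_congr rfl hsplit, Finset.sum_add_distrib]
    linarith [hcoll]
  -- combine
  have hc1pos : (0:ℝ) < ((n - 1).choose (k - 1) : ℝ) := by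
    exact_mod_cast Nat.choose_pos (by omega : k - 1 ≤ n - 1)
  have hn1 : (0:ℝ) < (n:ℝ) - 1 := by
    have : (2:ℝ) ≤ (n:ℝ) := by exact_mod_cast hn
    linarith
  have keyN : (n - 2).choose (k - 1) * (n - 1) = (n - 1).choose (k - 1) * (n - k) := by
    have h := Nat.choose_mul_succ_eq (n - 2) (k - 1)
    rw [show n - 2 + 1 = n - 1 by omega] at h
    rw [show n - 1 - (k - 1) = n - k by omega] at h
    exact h
  have keyR : ((n - 2).choose (k - 1) : ℝ) * ((n:ℝ) - 1)
      = ((n - 1).choose (k - 1) : ℝ) * ((n:ℝ) - (k:ℝ)) := by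
    have h := congrArg (fun m : ℕ => (m : ℝ)) keyN
    simpa [Nat.cast_mul, Nat.cast_sub (show 1 ≤ n by omega), Nat.cast_sub hkn] using h
  have hq : ((n - 2).choose (k - 1) : ℝ)
      = ((n - 1).choose (k - 1) : ℝ) * (((n:ℝ) - k) / ((n:ℝ) - 1)) := by
    field_simp
    linarith [keyR]
  have hmain : ((n - 1).choose (k - 1) : ℝ) * (∑ i, ∑ j ∈ O i, w j)
      ≤ α * (((n - 1).choose (k - 1) : ℝ) * ∑ i, ∑ j ∈ S i, w j)
        + ((n - 2).choose (k - 1) : ℝ) * ∑ i, ∑ j ∈ Finset.univ.erase i, g i j := by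
    calc ((n - 1).choose (k - 1) : ℝ) * (∑ i, ∑ j ∈ O i, w j)
        = ∑ K ∈ 𝒦, ∑ i ∈ K, (∑ t ∈ O i, w t) := (swap1 _).symm
      _ ≤ ∑ K ∈ 𝒦, (α * ∑ i ∈ K, (∑ t ∈ S i, w t)
            + ∑ i ∈ K, ∑ j ∈ Finset.univ \ K, g i j) := Finset.sum_le_sum step1
      _ = α * (((n - 1).choose (k - 1) : ℝ) * ∑ i, ∑ j ∈ S i, w j)
            + ((n - 2).choose (k - 1) : ℝ) * ∑ i, ∑ j ∈ Finset.univ.erase i, g i j := by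
          rw [Finset.sum_add_distrib, ← Finset.mul_sum, swap1 (fun i => ∑ t ∈ S i, w t),
            swap2]
  have hG : ((n - 2).choose (k - 1) : ℝ) * ∑ i, ∑ j ∈ Finset.univ.erase i, g i j
      ≤ ((n - 2).choose (k - 1) : ℝ) * ∑ j, ∑ t ∈ S j, w t :=
    mul_le_mul_of_nonneg_left step3 (Nat.cast_nonneg _)
  refine le_of_mul_le_mul_left ?_ hc1pos
  calc ((n - 1).choose (k - 1) : ℝ) * (∑ i, ∑ j ∈ O i, w j)
      ≤ α * (((n - 1).choose (k - 1) : ℝ) * ∑ i, ∑ j ∈ S i, w j)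
          + ((n - 2).choose (k - 1) : ℝ) * ∑ j, ∑ t ∈ S j, w t := by linarith
    _ = ((n - 1).choose (k - 1) : ℝ)
          * ((α + ((n:ℝ) - k) / ((n:ℝ) - 1)) * ∑ i, ∑ j ∈ S i, w j) := by
        rw [hq]; ring
end

section
/- For every integer n ≥ 2, every integer k with 1 ≤ k ≤ n, and every real α ≥ 1, there exists a set packing game with n players, an α-approximate k-collusion Nash equilibrium S with w(S) > 0, and a feasible profile O, such that w(O)/w(S) = α + (n−k)/(n−1); hence the k-collusion price of anarchy of set packing games under α-approximate k-collusion Nash equilibria is exactly α + (n−k)/(n−1). -/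
private lemma sp_lt_aux {n a b : ℕ} (ha : a < n) (hb : b < n) : n*a + b < n*n := by
  nlinarith

/-- the equilibrium set of player `i` -/
private def spS (n : ℕ) (i : Fin n) : Finset ℕ :=
  (Finset.univ.erase i).image (fun j : Fin n => n * (i : ℕ) + (j : ℕ))

/-- the optimum set of player `i` -/
private def spO (n : ℕ) (i : Fin n) : Finset ℕ :=
  insert (n*n + (i : ℕ)) ((Finset.univ.erase i).image (fun j : Fin n => n * (j : ℕ) + (i : ℕ)))

private lemma mem_spS {n : ℕ} {i : Fin n} {t : ℕ} :
    t ∈ spS n i ↔ ∃ j : Fin n, j ≠ i ∧ n * (i : ℕ) + (j : ℕ) = t := by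
  simp [spS, Finset.mem_image, Finset.mem_erase]

private lemma mem_spO {n : ℕ} {i : Fin n} {t : ℕ} :
    t ∈ spO n i ↔ t = n*n + (i : ℕ) ∨ ∃ j : Fin n, j ≠ i ∧ n * (j : ℕ) + (i : ℕ) = t := by
  simp [spO, Finset.mem_insert, Finset.mem_image, Finset.mem_erase]

/-- For every integer `n ≥ 2`, every integer `k` with `1 ≤ k ≤ n`,
and every real `α ≥ 1`, there exists a set packing game with `n` players, an
`α`-approximate `k`-collusion Nash equilibrium `S` with `w(S) > 0`, and a feasible
profile `O`, such that `w(O)/w(S) = α + (n−k)/(n−1)`; hence the `k`-collusion price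
of anarchy of set packing games under `α`-approximate `k`-collusion Nash equilibria is
exactly `α + (n−k)/(n−1)`. -/
theorem set_packing_collusion_poa_lower_bound
    (n k : ℕ) (hn : 2 ≤ n) (hk1 : 1 ≤ k) (hkn : k ≤ n) (α : ℝ) (hα : 1 ≤ α) :
    ∃ (J : Finset ℕ) (w : ℕ → ℝ) (𝒮 : Fin n → Set (Finset ℕ))
      (S O : Fin n → Finset ℕ),
      (∀ j ∈ J, 0 ≤ w j) ∧
      (∀ i, ∀ A ∈ 𝒮 i, A ⊆ J) ∧
      (∀ i, ∀ A ∈ 𝒮 i, ∀ T, T ⊆ A → T ∈ 𝒮 i) ∧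
      (∀ i, ∅ ∈ 𝒮 i) ∧
      -- S is a feasible profile
      (∀ i, S i ∈ 𝒮 i) ∧
      (∀ i j, i ≠ j → Disjoint (S i) (S j)) ∧
      -- O is a feasible profile
      (∀ i, O i ∈ 𝒮 i) ∧
      (∀ i j, i ≠ j → Disjoint (O i) (O j)) ∧
      -- S is an α-approximate k-collusion Nash equilibrium
      (∀ K : Finset (Fin n), K.card ≤ k →
        ∀ T : Fin n → Finset ℕ,
          (∀ i ∈ K, T i ∈ 𝒮 i) →
          (∀ i ∈ K, ∀ j ∈ K, i ≠ j → Disjoint (T i) (T j)) →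
          (∀ i ∈ K, ∀ j, j ∉ K → Disjoint (T i) (S j)) →
          ∑ i ∈ K, ∑ t ∈ T i, w t ≤ α * ∑ i ∈ K, ∑ t ∈ S i, w t) ∧
      -- positive value and ratio exactly α + (n−k)/(n−1)
      0 < ∑ i, ∑ j ∈ S i, w j ∧
      (∑ i, ∑ j ∈ O i, w j) / (∑ i, ∑ j ∈ S i, w j)
        = α + ((n : ℝ) - k) / ((n : ℝ) - 1) := by
  classical
  have hn0 : 0 < n := by omega
  have hn1R : (0:ℝ) < (n:ℝ) - 1 := by
    have : (2:ℝ) ≤ (n:ℝ) := by exact_mod_cast hn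
    linarith
  have hknR : (k:ℝ) ≤ (n:ℝ) := by exact_mod_cast hkn
  have hk1R : (1:ℝ) ≤ (k:ℝ) := by exact_mod_cast hk1
  set β : ℝ := α - 1 + ((n:ℝ) - k) / ((n:ℝ) - 1) with hβdef
  have hβ0 : 0 ≤ β := by
    have h1 : 0 ≤ ((n:ℝ)-k)/((n:ℝ)-1) := div_nonneg (by linarith) hn1R.le
    have : 0 ≤ α - 1 := by linarith
    simp only [hβdef]; linarith
  set w : ℕ → ℝ := fun m => if m < n*n then 1/((n:ℝ)-1) else β with hwdef
  have hwnn : ∀ m, 0 ≤ w m := by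
    intro m
    simp only [hwdef]
    split
    · positivity
    · exact hβ0
  have hwsmall : ∀ m, m < n*n → w m = 1/((n:ℝ)-1) := by
    intro m hm; simp only [hwdef]; rw [if_pos hm]
  have hwbig : ∀ m, n*n ≤ m → w m = β := by
    intro m hm; simp only [hwdef]; rw [if_neg (by omega)]
  -- subset bounds
  have hSsub : ∀ i : Fin n, spS n i ⊆ Finset.range (n*n + n) := by
    intro i t ht
    rcases mem_spS.mp ht with ⟨j, _, rfl⟩
    have := sp_lt_aux i.isLt j.isLt
    exact Finset.mem_range.mpr (by omega)
  have hOsub : ∀ i : Fin n, spO n i ⊆ Finset.range (n*n + n) := by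
    intro i t ht
    rcases mem_spO.mp ht with h | ⟨j, _, rfl⟩
    · exact Finset.mem_range.mpr (by have := i.isLt; omega)
    · have := sp_lt_aux j.isLt i.isLt
      exact Finset.mem_range.mpr (by omega)
  -- cardinality of erase
  have hcard : ∀ i : Fin n, (Finset.univ.erase i).card = n - 1 := by
    intro i
    rw [Finset.card_erase_of_mem (Finset.mem_univ i), Finset.card_univ, Fintype.card_fin]
  have hcastn1 : ((n - 1 : ℕ) : ℝ) = (n:ℝ) - 1 := by
    have : (1:ℕ) ≤ n := by omega
    push_cast [this]; ring
  -- sum over S i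
  have hsumS : ∀ i : Fin n, ∑ t ∈ spS n i, w t = 1 := by
    intro i
    rw [spS, Finset.sum_image (by
      intro a _ b _ hab
      exact Fin.ext (by beta_reduce at hab; omega))]
    have : ∀ j ∈ Finset.univ.erase i, w (n * (i:ℕ) + (j:ℕ)) = 1/((n:ℝ)-1) := by
      intro j _
      exact hwsmall _ (sp_lt_aux i.isLt j.isLt)
    rw [Finset.sum_congr rfl this, Finset.sum_const, hcard i, nsmul_eq_mul, hcastn1]
    field_simp
  -- sum over O i
  have hsumO : ∀ i : Fin n, ∑ t ∈ spO n i, w t = 1 + β := by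
    intro i
    have hnotmem : n*n + (i:ℕ) ∉ (Finset.univ.erase i).image
        (fun j : Fin n => n * (j:ℕ) + (i:ℕ)) := by
      intro h
      rcases Finset.mem_image.mp h with ⟨j, _, hj⟩
      have := sp_lt_aux j.isLt i.isLt
      omega
    rw [spO, Finset.sum_insert hnotmem, hwbig _ (by omega),
      Finset.sum_image (by
        intro a _ b _ hab
        have := i.isLt
        exact Fin.ext (by
          have h1 : n * (a:ℕ) = n * (b:ℕ) := by beta_reduce at hab; omega
          exact Nat.eq_of_mul_eq_mul_left hn0 h1))]
    have : ∀ j ∈ Finset.univ.erase i, w (n * (j:ℕ) + (i:ℕ)) = 1/((n:ℝ)-1) := by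
      intro j _
      exact hwsmall _ (sp_lt_aux j.isLt i.isLt)
    rw [Finset.sum_congr rfl this, Finset.sum_const, hcard i, nsmul_eq_mul, hcastn1]
    field_simp
    ring
  refine ⟨Finset.range (n*n + n), w,
    (fun i => {A : Finset ℕ | A ⊆ spS n i ∨ A ⊆ spO n i}),
    spS n, spO n, ?_, ?_, ?_, ?_, ?_, ?_, ?_, ?_, ?_, ?_, ?_⟩
  · intro j _; exact hwnn j
  · intro i A hA
    rcases hA with h | h
    · exact h.trans (hSsub i)
    · exact h.trans (hOsub i)
  · intro i A hA T hT
    rcases hA with h | h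
    · exact Or.inl (hT.trans h)
    · exact Or.inr (hT.trans h)
  · intro i; exact Or.inl (Finset.empty_subset _)
  · intro i; exact Or.inl (le_refl _)
  · -- S pairwise disjoint
    intro i j hij
    rw [Finset.disjoint_left]
    intro t hti htj
    rcases mem_spS.mp hti with ⟨a, _, ha⟩
    rcases mem_spS.mp htj with ⟨b, _, hb⟩
    have ha' : t / n = (i:ℕ) := by
      rw [← ha, Nat.mul_add_div hn0, Nat.div_eq_of_lt a.isLt]
      omega
    have hb' : t / n = (j:ℕ) := by
      rw [← hb, Nat.mul_add_div hn0, Nat.div_eq_of_lt b.isLt]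
      omega

    exact hij (Fin.ext (by omega))
  · intro i; exact Or.inr (le_refl _)
  · -- O pairwise disjoint
    intro i j hij
    rw [Finset.disjoint_left]
    intro t hti htj
    have hmi : t % n = (i:ℕ) := by
      rcases mem_spO.mp hti with h | ⟨a, _, ha⟩
      · rw [h, Nat.mul_add_mod, Nat.mod_eq_of_lt i.isLt]
      · rw [← ha, Nat.mul_add_mod, Nat.mod_eq_of_lt i.isLt]
    have hmj : t % n = (j:ℕ) := by
      rcases mem_spO.mp htj with h | ⟨a, _, ha⟩
      · rw [h, Nat.mul_add_mod, Nat.mod_eq_of_lt j.isLt]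
      · rw [← ha, Nat.mul_add_mod, Nat.mod_eq_of_lt j.isLt]
    exact hij (Fin.ext (by omega))
  · -- equilibrium
    intro K hK T hT hTT hTS
    have key : ∀ i ∈ K, ∑ t ∈ T i, w t ≤ α := by
      intro i hi
      rcases hT i hi with h | h
      · calc ∑ t ∈ T i, w t ≤ ∑ t ∈ spS n i, w t :=
              Finset.sum_le_sum_of_subset_of_nonneg h (fun m _ _ => hwnn m)
          _ = 1 := hsumS i
          _ ≤ α := hα
      · -- T i ⊆ O i case
        have hsub : T i ⊆ insert (n*n + (i:ℕ))
            ((K.erase i).image (fun j : Fin n => n * (j:ℕ) + (i:ℕ))) := by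
          intro t ht
          rcases mem_spO.mp (h ht) with heq | ⟨j, hji, hj⟩
          · exact Finset.mem_insert.mpr (Or.inl heq)
          · refine Finset.mem_insert.mpr (Or.inr (Finset.mem_image.mpr ⟨j, ?_, hj⟩))
            rw [Finset.mem_erase]
            refine ⟨hji, ?_⟩
            by_contra hjK
            have hdisj := hTS i hi j hjK
            have htSj : t ∈ spS n j := mem_spS.mpr ⟨i, Ne.symm hji, hj⟩
            exact (Finset.disjoint_left.mp hdisj ht) htSj
        have hnotmem : n*n + (i:ℕ) ∉ (K.erase i).image
            (fun j : Fin n => n * (j:ℕ) + (i:ℕ)) := by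
          intro hmem
          rcases Finset.mem_image.mp hmem with ⟨j, _, hj⟩
          have := sp_lt_aux j.isLt i.isLt
          omega
        have hcardK : ((K.erase i).card : ℝ) ≤ (k:ℝ) - 1 := by
          have h1 : (K.erase i).card = K.card - 1 := Finset.card_erase_of_mem hi
          have h2 : 1 ≤ K.card := Finset.card_pos.mpr ⟨i, hi⟩
          have h3 : (K.erase i).card ≤ k - 1 := by omega
          calc ((K.erase i).card : ℝ) ≤ ((k - 1 : ℕ) : ℝ) := by exact_mod_cast h3
            _ = (k:ℝ) - 1 := by push_cast [hk1]; ring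
        calc ∑ t ∈ T i, w t
            ≤ ∑ t ∈ insert (n*n + (i:ℕ))
                ((K.erase i).image (fun j : Fin n => n * (j:ℕ) + (i:ℕ))), w t :=
              Finset.sum_le_sum_of_subset_of_nonneg hsub (fun m _ _ => hwnn m)
          _ = β + ∑ t ∈ (K.erase i).image (fun j : Fin n => n * (j:ℕ) + (i:ℕ)), w t := by
              rw [Finset.sum_insert hnotmem, hwbig _ (by omega)]
          _ ≤ β + ((K.erase i).card : ℝ) * (1/((n:ℝ)-1)) := by
              have hb : ∀ t ∈ (K.erase i).image (fun j : Fin n => n * (j:ℕ) + (i:ℕ)),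
                  w t = 1/((n:ℝ)-1) := by
                intro t ht
                rcases Finset.mem_image.mp ht with ⟨j, _, hj⟩
                rw [← hj]
                exact hwsmall _ (sp_lt_aux j.isLt i.isLt)
              rw [Finset.sum_congr rfl hb, Finset.sum_const, nsmul_eq_mul]
              have hcle : ((K.erase i).image (fun j : Fin n => n * (j:ℕ) + (i:ℕ))).card
                  ≤ (K.erase i).card := Finset.card_image_le
              have hcleR : (((K.erase i).image (fun j : Fin n => n * (j:ℕ) + (i:ℕ))).card : ℝ)
                  ≤ ((K.erase i).card : ℝ) := Nat.cast_le.mpr hcle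
              have hpos : (0:ℝ) ≤ 1/((n:ℝ)-1) := by positivity
              nlinarith
          _ ≤ β + ((k:ℝ) - 1) * (1/((n:ℝ)-1)) := by
              have : (0:ℝ) ≤ 1/((n:ℝ)-1) := by positivity
              nlinarith
          _ = α := by
              simp only [hβdef]
              field_simp
              ring
    have hRHS : ∑ i ∈ K, ∑ t ∈ spS n i, w t = (K.card : ℝ) := by
      rw [Finset.sum_congr rfl (fun i _ => hsumS i), Finset.sum_const, nsmul_eq_mul, mul_one]
    rw [hRHS]
    calc ∑ i ∈ K, ∑ t ∈ T i, w t ≤ ∑ _i ∈ K, α := Finset.sum_le_sum key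
      _ = (K.card : ℝ) * α := by rw [Finset.sum_const, nsmul_eq_mul]
      _ = α * (K.card : ℝ) := by ring
  · -- positivity
    rw [Finset.sum_congr rfl (fun i _ => hsumS i), Finset.sum_const, nsmul_eq_mul,
      Finset.card_univ, Fintype.card_fin, mul_one]
    exact_mod_cast hn0
  · -- ratio
    rw [Finset.sum_congr rfl (fun i _ => hsumS i),
      Finset.sum_congr rfl (fun i _ => hsumO i),
      Finset.sum_const, Finset.sum_const, Finset.card_univ, Fintype.card_fin,
      nsmul_eq_mul, nsmul_eq_mul, mul_one]
    simp only [hβdef]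
    have hnR : (n:ℝ) ≠ 0 := by positivity
    have hn1 : (n:ℝ) - 1 ≠ 0 := ne_of_gt hn1R
    field_simp
    ring
end
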